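/- arXiv:1411.2517 — 6 statements merged into one kernel-verified Lean document; each statement's English description precedes it below -/
import Mathlib

section
/- For every vector v ∈ ℝⁿ and every n×n real matrix A, there exists a special orthogonal matrix O ∈ SO(n) such that the vector whose i-th component is |(Ov)_i| is linearly dependent with the vector whose i-th component is the Euclidean norm of the i-th row of OA. -/
open Matrix

section Auxiliary
open Module Submodule
open scoped RealInnerProductSpace

lemma trace_eq_sum_inner' {E : Type*} [NormedAddCommGroup E] [InnerProductSpace ℝ E]
    [FiniteDimensional ℝ E] {ι : Type*} [Fintype ι] [DecidableEq ι]
    (b : OrthonormalBasis ι ℝ E) (T : E →ₗ[ℝ] E) :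
    LinearMap.trace ℝ E T = ∑ i, ⟪b i, T (b i)⟫ := by
  rw [LinearMap.trace_eq_matrix_trace ℝ b.toBasis, Matrix.trace]
  congr 1
  ext i
  rw [Matrix.diag_apply, LinearMap.toMatrix_apply, OrthonormalBasis.coe_toBasis,
    OrthonormalBasis.coe_toBasis_repr_apply, OrthonormalBasis.repr_apply_apply]

lemma exists_unit_isotropic {E : Type*} [NormedAddCommGroup E] [InnerProductSpace ℝ E]
    [FiniteDimensional ℝ E] {n : ℕ} (hn : finrank ℝ E = n + 1)
    {T : E →ₗ[ℝ] E} (hT : T.IsSymmetric) (htr : LinearMap.trace ℝ E T = 0) :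
    ∃ x : E, ‖x‖ = 1 ∧ ⟪x, T x⟫ = 0 := by
  set b := hT.eigenvectorBasis hn with hb
  set μ := hT.eigenvalues hn with hμ
  have hnorm : ∀ i, ‖b i‖ = 1 := fun i => b.orthonormal.1 i
  have hval : ∀ i, ⟪b i, T (b i)⟫ = μ i := by
    intro i
    rw [hT.apply_eigenvectorBasis hn i]
    rw [real_inner_smul_right, real_inner_self_eq_norm_sq, hnorm i]
    simp
    rfl
  have hsum : ∑ i, μ i = 0 := by
    rw [← htr, trace_eq_sum_inner' b T]
    exact Finset.sum_congr rfl fun i _ => (hval i).symm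
  -- there is an index with μ ≤ 0 and one with μ ≥ 0
  obtain ⟨i, hi⟩ : ∃ i, μ i ≤ 0 := by
    by_contra h
    push_neg at h
    have : 0 < ∑ i, μ i := Finset.sum_pos (fun i _ => h i) ⟨0, Finset.mem_univ 0⟩
    linarith
  obtain ⟨j, hj⟩ : ∃ j, 0 ≤ μ j := by
    by_contra h
    push_neg at h
    have : ∑ i, μ i < 0 := Finset.sum_neg (fun i _ => h i) ⟨0, Finset.mem_univ 0⟩
    linarith
  rcases eq_or_lt_of_le hi with hi0 | hi0
  · exact ⟨b i, hnorm i, by rw [hval i, hi0]⟩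
  rcases eq_or_lt_of_le hj with hj0 | hj0
  · exact ⟨b j, hnorm j, by rw [hval j, ← hj0]⟩
  have hij : i ≠ j := fun h => by rw [h] at hi0; linarith
  set d : ℝ := μ j - μ i with hd
  have hdpos : 0 < d := by dsimp [d]; linarith
  set a : ℝ := Real.sqrt (μ j / d) with ha
  set c : ℝ := Real.sqrt (-μ i / d) with hc
  have ha2 : a ^ 2 = μ j / d := Real.sq_sqrt (by positivity)
  have hc2 : c ^ 2 = -μ i / d := Real.sq_sqrt (div_nonneg (by linarith) hdpos.le)
  refine ⟨a • b i + c • b j, ?_, ?_⟩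
  · have horth : ⟪b i, b j⟫ = 0 := b.orthonormal.2 hij
    have horth' : ⟪b j, b i⟫ = 0 := by rw [real_inner_comm]; exact horth
    have h1 : ⟪a • b i + c • b j, a • b i + c • b j⟫ = a ^ 2 + c ^ 2 := by
      rw [inner_add_left, inner_add_right, inner_add_right]
      simp [inner_add_left, inner_add_right, real_inner_smul_left, real_inner_smul_right,
        horth, horth', real_inner_self_eq_norm_sq, hnorm, norm_smul, sq_abs]
    have h2 : a ^ 2 + c ^ 2 = 1 := by
      rw [ha2, hc2, ← add_div, div_eq_one_iff_eq hdpos.ne', hd]; ring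
    have := real_inner_self_eq_norm_sq (a • b i + c • b j)
    nlinarith [norm_nonneg (a • b i + c • b j)]
  · have horth : ⟪b i, b j⟫ = 0 := b.orthonormal.2 hij
    have horth' : ⟪b j, b i⟫ = 0 := by rw [real_inner_comm]; exact horth
    have hTi := hT.apply_eigenvectorBasis hn i
    have hTj := hT.apply_eigenvectorBasis hn j
    rw [map_add, _root_.map_smul, _root_.map_smul, hTi, hTj]
    simp only [inner_add_left, inner_add_right, real_inner_smul_left, real_inner_smul_right,
      smul_smul]
    rw [real_inner_self_eq_norm_sq, real_inner_self_eq_norm_sq, hnorm, hnorm, horth, horth']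
    simp only [RCLike.ofReal_real_eq_id, id]
    simp only [← hμ]
    linear_combination (μ i) * ha2 + (μ j) * hc2

/-- Combining a unit vector with an orthonormal family of its orthogonal complement. -/
lemma orthonormal_cons {E : Type*} [NormedAddCommGroup E] [InnerProductSpace ℝ E]
    {x : E} (hx : ‖x‖ = 1) {m : ℕ} (c : Fin m → (ℝ ∙ x)ᗮ) (hc : Orthonormal ℝ c) :
    Orthonormal ℝ (Fin.cons x (fun i => (c i : E)) : Fin (m + 1) → E) := by
  rw [orthonormal_iff_ite]
  intro i j
  have hxc : ∀ k : Fin m, ⟪x, (c k : E)⟫ = 0 := fun k =>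
    inner_right_of_mem_orthogonal (mem_span_singleton_self x) (c k).2
  have hcx : ∀ k : Fin m, ⟪(c k : E), x⟫ = 0 := fun k => by
    rw [real_inner_comm]; exact hxc k
  have hcc := orthonormal_iff_ite.mp hc
  refine Fin.cases ?_ ?_ i
  · refine Fin.cases ?_ ?_ j
    · simp [real_inner_self_eq_norm_sq, hx]
    · intro k; simp [hxc k, (Fin.succ_ne_zero k).symm]
  · intro k
    refine Fin.cases ?_ ?_ j
    · simp [hcx k, Fin.succ_ne_zero k]
    · intro l
      have h2 : (inner ℝ ((c k : E)) ((c l : E)) : ℝ) = inner ℝ (c k) (c l) := rfl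
      simp only [Fin.cons_succ]
      rw [h2, hcc k l]
      simp [Fin.succ_inj]

lemma exists_orthonormalBasis_isotropic (n : ℕ) :
    ∀ (E : Type) [NormedAddCommGroup E] [InnerProductSpace ℝ E] [FiniteDimensional ℝ E]
      (T : E →ₗ[ℝ] E), T.IsSymmetric → finrank ℝ E = n → LinearMap.trace ℝ E T = 0 →
      ∃ b : OrthonormalBasis (Fin n) ℝ E, ∀ i, ⟪b i, T (b i)⟫ = 0 := by
  induction n with
  | zero =>
    intro E _ _ _ T _ hdim _
    have : Subsingleton E := finrank_zero_iff.mp hdim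
    have hon : Orthonormal ℝ (fun i : Fin 0 => (0 : E)) := ⟨fun i => i.elim0, fun {i} => i.elim0⟩
    have hsp : ⊤ ≤ span ℝ (Set.range fun i : Fin 0 => (0 : E)) := by
      intro y _
      rw [Subsingleton.elim y 0]
      exact Submodule.zero_mem _
    exact ⟨OrthonormalBasis.mk hon hsp, fun i => i.elim0⟩
  | succ n IH =>
    intro E _ _ _ T hT hdim htr
    obtain ⟨x, hx1, hx0⟩ := exists_unit_isotropic hdim hT htr
    have hxne : x ≠ 0 := fun h => by rw [h, norm_zero] at hx1; norm_num at hx1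
    haveI : Fact (finrank ℝ E = n + 1) := ⟨hdim⟩
    set W : Submodule ℝ E := (ℝ ∙ x)ᗮ with hW
    have hdimW : finrank ℝ W = n := finrank_orthogonal_span_singleton hxne
    -- the compressed operator on W
    set T' : W →ₗ[ℝ] W :=
      (orthogonalProjection W).toLinearMap ∘ₗ T ∘ₗ W.subtype with hT'def
    have hinner : ∀ y z : W, ⟪T' y, z⟫ = ⟪T (y : E), (z : E)⟫ := by
      intro y z
      rw [Submodule.coe_inner]
      simp only [hT'def, LinearMap.comp_apply, ContinuousLinearMap.coe_coe, Submodule.coe_subtype]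
      rw [← Submodule.coe_inner, inner_orthogonalProjection_eq_of_mem_right]
    have hT' : T'.IsSymmetric := by
      intro y z
      calc ⟪T' y, z⟫ = ⟪T (y : E), (z : E)⟫ := hinner y z
        _ = ⟪(y : E), T (z : E)⟫ := hT _ _
        _ = ⟪T (z : E), (y : E)⟫ := real_inner_comm _ _
        _ = ⟪T' z, y⟫ := (hinner z y).symm
        _ = ⟪y, T' z⟫ := real_inner_comm _ _
    -- an orthonormal basis of W
    have hq : ∀ c : W, ⟪c, T' c⟫ = ⟪(c : E), T (c : E)⟫ := by
      intro c
      rw [real_inner_comm, hinner c c, real_inner_comm]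
    -- trace of T' is zero
    have htr' : LinearMap.trace ℝ W T' = 0 := by
      set c : OrthonormalBasis (Fin n) ℝ W := (stdOrthonormalBasis ℝ W).reindex
        (finCongr hdimW) with hcdef
      have hcard : Fintype.card (Fin (n + 1)) = finrank ℝ E := by simp [hdim]
      have hon := orthonormal_cons hx1 (fun i => c i) c.orthonormal
      have hsp : ⊤ ≤ span ℝ (Set.range (Fin.cons x (fun i => (c i : E)) : Fin (n+1) → E)) :=
        (hon.linearIndependent.span_eq_top_of_card_eq_finrank hcard).ge
      set f : OrthonormalBasis (Fin (n + 1)) ℝ E := OrthonormalBasis.mk hon hsp with hfdef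
      have hf : ∀ i, f i = (Fin.cons x (fun i => (c i : E)) : Fin (n+1) → E) i := by
        intro i; rw [hfdef, OrthonormalBasis.coe_mk]
      have := trace_eq_sum_inner' f T
      rw [htr, Fin.sum_univ_succ] at this
      simp only [hf, Fin.cons_zero, Fin.cons_succ] at this
      rw [hx0] at this
      rw [trace_eq_sum_inner' c T']
      rw [Finset.sum_congr rfl fun i _ => hq (c i)]
      linarith [this]
    obtain ⟨c, hc⟩ := IH W T' hT' hdimW htr'
    -- assemble the final basis
    have hcard : Fintype.card (Fin (n + 1)) = finrank ℝ E := by simp [hdim]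
    have hon := orthonormal_cons hx1 (fun i => c i) c.orthonormal
    have hsp : ⊤ ≤ span ℝ (Set.range (Fin.cons x (fun i => (c i : E)) : Fin (n+1) → E)) :=
      (hon.linearIndependent.span_eq_top_of_card_eq_finrank hcard).ge
    refine ⟨OrthonormalBasis.mk hon hsp, ?_⟩
    intro i
    rw [OrthonormalBasis.coe_mk]
    refine Fin.cases ?_ ?_ i
    · simpa using hx0
    · intro k
      simp only [Fin.cons_succ]
      have := hc k
      rw [hq (c k)] at this
      exact this

lemma exists_SO_diag_zero {n : ℕ} (S : Matrix (Fin n) (Fin n) ℝ) (hS : Sᵀ = S)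
    (htr : Matrix.trace S = 0) :
    ∃ O : Matrix (Fin n) (Fin n) ℝ, O * Oᵀ = 1 ∧ O.det = 1 ∧ ∀ i, (O * S * Oᵀ) i i = 0 := by
  have hsym : ∀ i j, S i j = S j i := fun i j => by
    conv_rhs => rw [← hS]
    exact (Matrix.transpose_apply S j i).symm
  set T : EuclideanSpace ℝ (Fin n) →ₗ[ℝ] EuclideanSpace ℝ (Fin n) :=
    { toFun := fun x => WithLp.toLp 2 (S.mulVec x)
      map_add' := fun x y => by ext i; simp [Matrix.mulVec_add]
      map_smul' := fun c x => by ext i; simp [Matrix.mulVec_smul] } with hTdef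
  have hTapp : ∀ (x : EuclideanSpace ℝ (Fin n)) (i : Fin n), T x i = ∑ j, S i j * x j := by
    intro x i; rfl
  have hinner : ∀ x y : EuclideanSpace ℝ (Fin n), ⟪x, y⟫ = ∑ i, x i * y i := by
    intro x y
    simp [PiLp.inner_apply, RCLike.inner_apply, starRingEnd_apply]
    exact Finset.sum_congr rfl fun i _ => mul_comm _ _
  have hTsymm : T.IsSymmetric := by
    intro x y
    rw [hinner, hinner]
    have l1 : ∑ i, T x i * y i = ∑ i, ∑ j, S i j * x j * y i := by
      refine Finset.sum_congr rfl fun i _ => ?_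
      rw [hTapp, Finset.sum_mul]
    have l2 : ∑ i, x i * T y i = ∑ i, ∑ j, x i * (S i j * y j) := by
      refine Finset.sum_congr rfl fun i _ => ?_
      rw [hTapp, Finset.mul_sum]
    rw [l1, l2, Finset.sum_comm]
    refine Finset.sum_congr rfl fun i _ => Finset.sum_congr rfl fun j _ => ?_
    rw [hsym i j]; ring
  have hdim : finrank ℝ (EuclideanSpace ℝ (Fin n)) = n := by
    simp [finrank_euclideanSpace]
  have htrT : LinearMap.trace ℝ (EuclideanSpace ℝ (Fin n)) T = 0 := by
    rw [trace_eq_sum_inner' (EuclideanSpace.basisFun (Fin n) ℝ) T]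
    rw [← htr, Matrix.trace]
    refine Finset.sum_congr rfl fun i _ => ?_
    rw [hinner]
    have : ∀ j, (EuclideanSpace.basisFun (Fin n) ℝ) i j = if j = i then 1 else 0 := by
      intro j
      rw [EuclideanSpace.basisFun_apply, EuclideanSpace.single_apply]
    simp only [this, hTapp]
    rw [Finset.sum_eq_single i (fun k _ hk => by simp [hk]) (by simp)]
    rw [if_pos rfl, one_mul]
    rw [Finset.sum_eq_single i (fun j _ hj => by simp [hj]) (by simp)]
    simp [Matrix.diag_apply]
  obtain ⟨b, hb⟩ := exists_orthonormalBasis_isotropic n (EuclideanSpace ℝ (Fin n)) T hTsymm hdim htrT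
  set O : Matrix (Fin n) (Fin n) ℝ := Matrix.of (fun i j => b i j) with hO
  have hOapp : ∀ i j, O i j = b i j := fun i j => rfl
  have horth : O * Oᵀ = 1 := by
    ext i j
    rw [Matrix.mul_apply]
    have : ∑ k, O i k * Oᵀ k j = ⟪b i, b j⟫ := by
      rw [hinner]
      exact Finset.sum_congr rfl fun k _ => rfl
    rw [this, orthonormal_iff_ite.mp b.orthonormal i j, Matrix.one_apply]
  have hdiag : ∀ i, (O * S * Oᵀ) i i = 0 := by
    intro i
    have e1 : (O * S * Oᵀ) i i = ∑ k, ∑ j, O i j * S j k * O i k := by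
      simp only [Matrix.mul_apply, Matrix.transpose_apply, Finset.sum_mul]
    have e2 : ⟪b i, T (b i)⟫ = ∑ j, ∑ k, O i j * S j k * O i k := by
      rw [hinner]
      refine Finset.sum_congr rfl fun j _ => ?_
      rw [hTapp, Finset.mul_sum]
      exact Finset.sum_congr rfl fun k _ => by rw [hOapp, hOapp]; ring
    rw [e1, Finset.sum_comm, ← e2, hb i]
  -- determinant is ±1
  have hdet2 : O.det * O.det = 1 := by
    have := congrArg Matrix.det horth
    rwa [Matrix.det_mul, Matrix.det_transpose, Matrix.det_one] at this
  rcases mul_self_eq_one_iff.mp hdet2 with hdet | hdet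
  · exact ⟨O, horth, hdet, hdiag⟩
  · -- fix the sign by negating one row
    rcases Nat.eq_zero_or_pos n with h0 | h0
    · exfalso
      subst h0
      rw [Matrix.det_fin_zero] at hdet
      norm_num at hdet
    set i0 : Fin n := ⟨0, h0⟩ with hi0
    set d : Fin n → ℝ := fun i => if i = i0 then -1 else 1 with hd
    set D : Matrix (Fin n) (Fin n) ℝ := Matrix.diagonal d with hD
    have hDD : D * D = 1 := by
      rw [hD, Matrix.diagonal_mul_diagonal]
      have : (fun i => d i * d i) = fun _ => (1:ℝ) := by
        funext i; rw [hd]; by_cases h : i = i0 <;> simp [h]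
      rw [this, Matrix.diagonal_one]
    have hDT : Dᵀ = D := by rw [hD, Matrix.diagonal_transpose]
    have hdetD : D.det = -1 := by
      rw [hD, Matrix.det_diagonal, hd]
      rw [Finset.prod_ite_eq' Finset.univ i0 (fun _ => (-1:ℝ))]
      simp
    refine ⟨D * O, ?_, ?_, ?_⟩
    · rw [Matrix.transpose_mul, hDT, ← Matrix.mul_assoc, Matrix.mul_assoc D O Oᵀ, horth,
        Matrix.mul_one, hDD]
    · rw [Matrix.det_mul, hdetD, hdet]; norm_num
    · intro i
      have : D * O * S * (D * O)ᵀ = D * (O * S * Oᵀ) * D := by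
        rw [Matrix.transpose_mul, hDT]
        noncomm_ring [Matrix.mul_assoc]
      rw [this]
      have h1 : (D * (O * S * Oᵀ) * D) i i = (D * (O * S * Oᵀ)) i i * d i := by
        rw [hD]; exact Matrix.mul_diagonal d _ i i
      have h2 : (D * (O * S * Oᵀ)) i i = d i * (O * S * Oᵀ) i i := by
        rw [hD]; exact Matrix.diagonal_mul d _ i i
      rw [h1, h2, hdiag i]; ring

end Auxiliary

/-- For every `v ∈ ℝⁿ` and every `n × n` real matrix `A`, there is a special
orthogonal matrix `O` such that the vector of absolute values of the components of `Ov`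
and the vector of Euclidean norms of the rows of `OA` are linearly dependent. -/
theorem exists_SO_abs_mulVec_rows_dependent {n : ℕ} (v : Fin n → ℝ)
    (A : Matrix (Fin n) (Fin n) ℝ) :
    ∃ O : Matrix (Fin n) (Fin n) ℝ, O * Oᵀ = 1 ∧ O.det = 1 ∧
      ¬ LinearIndependent ℝ
        ![(fun i => |(O.mulVec v) i|),
          (fun i => Real.sqrt (∑ j, ((O * A) i j) ^ 2))] := by
  by_cases hA : A = 0
  · refine ⟨1, by simp, by simp, ?_⟩
    rw [linearIndependent_fin2]
    push_neg
    intro h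
    exfalso
    apply h
    funext i
    simp [Matrix.cons_val_one, Matrix.head_cons, hA]
  · -- the Frobenius norm squared of A is positive
    set F : ℝ := ∑ i, ∑ j, A i j ^ 2 with hF
    have hFpos : 0 < F := by
      obtain ⟨i, j, hij⟩ : ∃ i j, A i j ≠ 0 := by
        by_contra h
        push_neg at h
        exact hA (Matrix.ext fun i j => h i j)
      calc (0:ℝ) < A i j ^ 2 := by positivity
        _ ≤ ∑ j', A i j' ^ 2 :=
            Finset.single_le_sum (f := fun j' => A i j' ^ 2)
              (fun k _ => sq_nonneg _) (Finset.mem_univ j)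
        _ ≤ F := by
            rw [hF]
            exact Finset.single_le_sum (f := fun i' => ∑ j', A i' j' ^ 2)
              (fun k _ => Finset.sum_nonneg fun l _ => sq_nonneg _) (Finset.mem_univ i)
    set t : ℝ := (∑ i, v i ^ 2) / F with ht
    have htnonneg : 0 ≤ t := div_nonneg (Finset.sum_nonneg fun i _ => sq_nonneg _) hFpos.le
    set S : Matrix (Fin n) (Fin n) ℝ := vecMulVec v v - t • (A * Aᵀ) with hS
    have hSsymm : Sᵀ = S := by
      rw [hS, Matrix.transpose_sub, Matrix.transpose_smul, Matrix.transpose_mul,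
        Matrix.transpose_transpose]
      congr 1
      ext i j
      simp [Matrix.vecMulVec_apply, mul_comm]
    have hStr : Matrix.trace S = 0 := by
      rw [hS, Matrix.trace_sub, Matrix.trace_smul]
      have h1 : Matrix.trace (vecMulVec v v) = ∑ i, v i ^ 2 := by
        rw [Matrix.trace]
        exact Finset.sum_congr rfl fun i _ => by
          simp [Matrix.diag_apply, Matrix.vecMulVec_apply, sq]
      have h2 : Matrix.trace (A * Aᵀ) = F := by
        rw [Matrix.trace, hF]
        refine Finset.sum_congr rfl fun i _ => ?_
        simp [Matrix.diag_apply, Matrix.mul_apply, sq]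
      rw [h1, h2, smul_eq_mul, ht]
      field_simp
      ring
    obtain ⟨O, horth, hdet, hdiag⟩ := exists_SO_diag_zero S hSsymm hStr
    have key : ∀ i, (O.mulVec v i) ^ 2 = t * ∑ j, ((O * A) i j) ^ 2 := by
      intro i
      have hOS : O * S * Oᵀ = O * vecMulVec v v * Oᵀ - t • ((O * A) * (O * A)ᵀ) := by
        rw [hS, Matrix.mul_sub, Matrix.sub_mul, Matrix.mul_smul, Matrix.smul_mul,
          Matrix.transpose_mul]
        congr 2
        rw [← Matrix.mul_assoc O A Aᵀ, Matrix.mul_assoc (O * A) Aᵀ Oᵀ]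
      have e1 : (O * vecMulVec v v * Oᵀ) i i = (O.mulVec v i) ^ 2 := by
        have l1 : (O * vecMulVec v v * Oᵀ) i i
            = ∑ k, ∑ j, O i j * (v j * v k) * O i k := by
          simp only [Matrix.mul_apply, Matrix.transpose_apply, Matrix.vecMulVec_apply,
            Finset.sum_mul]
        have l2 : (O.mulVec v i) ^ 2 = (∑ j, O i j * v j) * (∑ k, O i k * v k) := by
          rw [sq]; rfl
        rw [l1, l2, Finset.sum_mul_sum]
        rw [Finset.sum_comm]
        exact Finset.sum_congr rfl fun k _ => Finset.sum_congr rfl fun j _ => by ring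
      have e2 : ((O * A) * (O * A)ᵀ) i i = ∑ j, ((O * A) i j) ^ 2 := by
        rw [Matrix.mul_apply]
        exact Finset.sum_congr rfl fun j _ => by
          rw [Matrix.transpose_apply, sq]
      have := hdiag i
      rw [hOS] at this
      have : (O * vecMulVec v v * Oᵀ) i i - t * (((O * A) * (O * A)ᵀ) i i) = 0 := by
        rw [← this]
        simp [Matrix.sub_apply, Matrix.smul_apply]
      rw [e1, e2] at this
      linarith
    refine ⟨O, horth, hdet, ?_⟩
    rw [linearIndependent_fin2]
    push_neg
    intro _
    refine ⟨Real.sqrt t, ?_⟩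
    funext i
    simp only [Matrix.cons_val_one, Matrix.head_cons, Matrix.cons_val_zero, Pi.smul_apply,
      smul_eq_mul]
    rw [← Real.sqrt_mul htnonneg, ← key i, Real.sqrt_sq_eq_abs]
end

section
/- Let S be a real symmetric n×n matrix with trace zero. Then there exists an orthogonal matrix O such that all diagonal entries of O S Oᵀ are zero. -/
open Matrix

private lemma sum_twopoint {n : ℕ} {i j : Fin n} (hij : i ≠ j) (f : Fin n → ℝ)
    (h : ∀ k, k ≠ i → k ≠ j → f k = 0) : ∑ k, f k = f i + f j := by
  rw [← Finset.sum_pair hij]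
  refine (Finset.sum_subset (Finset.subset_univ _) ?_).symm
  intro k _ hk
  simp only [Finset.mem_insert, Finset.mem_singleton, not_or] at hk
  exact h k hk.1 hk.2

private def givens {n : ℕ} (i j : Fin n) (c s : ℝ) : Matrix (Fin n) (Fin n) ℝ :=
  Matrix.of fun k l =>
    if k = i then (if l = i then c else if l = j then s else 0)
    else if k = j then (if l = i then -s else if l = j then c else 0)
    else if k = l then 1 else 0

private lemma givens_dot {n : ℕ} {i j : Fin n} (hij : i ≠ j) (c s : ℝ)
    (k : Fin n) (v : Fin n → ℝ) :
    ∑ p, givens i j c s k p * v p =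
      if k = i then c * v i + s * v j
      else if k = j then -s * v i + c * v j else v k := by
  by_cases hk : k = i
  · subst hk
    rw [sum_twopoint hij]
    · simp [givens, hij, Ne.symm hij]
    · intro p hpi hpj
      simp [givens, hpi, hpj]
  · by_cases hk2 : k = j
    · subst hk2
      rw [sum_twopoint hij]
      · simp [givens, hij, Ne.symm hij, hk]
      · intro p hpi hpj
        simp [givens, hpi, hpj, hk]
    · simp [givens, hk, hk2]

private lemma givens_mul_apply {n : ℕ} {i j : Fin n} (hij : i ≠ j) (c s : ℝ)
    (M : Matrix (Fin n) (Fin n) ℝ) (k l : Fin n) :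
    (givens i j c s * M) k l =
      if k = i then c * M i l + s * M j l
      else if k = j then -s * M i l + c * M j l else M k l := by
  rw [Matrix.mul_apply]
  exact givens_dot hij c s k (fun p => M p l)

private lemma mul_givens_transpose_apply {n : ℕ} {i j : Fin n} (hij : i ≠ j) (c s : ℝ)
    (M : Matrix (Fin n) (Fin n) ℝ) (k l : Fin n) :
    (M * (givens i j c s)ᵀ) k l =
      if l = i then c * M k i + s * M k j
      else if l = j then -s * M k i + c * M k j else M k l := by
  rw [Matrix.mul_apply]
  have : ∀ p, M k p * (givens i j c s)ᵀ p l = givens i j c s l p * M k p := by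
    intro p; rw [Matrix.transpose_apply, mul_comm]
  rw [Finset.sum_congr rfl fun p _ => this p]
  exact givens_dot hij c s l (fun p => M k p)

private lemma givens_mul_transpose {n : ℕ} {i j : Fin n} (hij : i ≠ j) {c s : ℝ}
    (hcs : c ^ 2 + s ^ 2 = 1) :
    givens i j c s * (givens i j c s)ᵀ = 1 := by
  ext k l
  rw [mul_givens_transpose_apply hij]
  by_cases hl : l = i
  · by_cases hk : k = i
    · simp [givens, Matrix.one_apply, hl, hk, hij, Ne.symm hij]
      nlinarith [hcs]
    · by_cases hk2 : k = j
      · simp [givens, Matrix.one_apply, hl, hk2, hij, Ne.symm hij, hk]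
        ring
      · simp [givens, Matrix.one_apply, hl, hk, hk2, fun h : k = i => hk h]
  · by_cases hl2 : l = j
    · by_cases hk : k = i
      · simp [givens, Matrix.one_apply, hl2, hk, hij, Ne.symm hij]
        ring
      · by_cases hk2 : k = j
        · simp [givens, Matrix.one_apply, hl2, hk2, hij, Ne.symm hij, hk]
          nlinarith [hcs]
        · simp [givens, Matrix.one_apply, hl2, hk, hk2]
    · by_cases hk : k = i
      · simp [givens, Matrix.one_apply, hk, hl, hl2, Ne.symm hl, Ne.symm hl2,
          fun h : i = l => hl h.symm]
      · by_cases hk2 : k = j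
        · simp [givens, Matrix.one_apply, hk2, hk, hl, hl2, Ne.symm hl, Ne.symm hl2,
            fun h : j = l => hl2 h.symm]
        · simp [givens, Matrix.one_apply, hk, hk2, hl, hl2]

private lemma aux : ∀ (N : ℕ) {n : ℕ} (S : Matrix (Fin n) (Fin n) ℝ),
    (Finset.univ.filter fun k => S k k ≠ 0).card ≤ N → Sᵀ = S → S.trace = 0 →
    ∃ O : Matrix (Fin n) (Fin n) ℝ, O * Oᵀ = 1 ∧ ∀ k, (O * S * Oᵀ) k k = 0 := by
  intro N
  induction N with
  | zero =>
    intro n S hcard hS htr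
    have hall : ∀ k, S k k = 0 := by
      intro k
      by_contra h
      have hk : k ∈ Finset.univ.filter fun k => S k k ≠ 0 := by simp [h]
      have := Finset.card_pos.mpr ⟨k, hk⟩
      omega
    exact ⟨1, by simp, fun k => by simp [hall]⟩
  | succ N ih =>
    intro n S hcard hS htr
    by_cases hall : ∀ k, S k k = 0
    · exact ⟨1, by simp, fun k => by simp [hall]⟩
    push_neg at hall
    obtain ⟨k₀, hk₀⟩ := hall
    have htrsum : ∑ k, S k k = 0 := by simpa [Matrix.trace, Matrix.diag] using htr
    have hi : ∃ i, 0 < S i i := by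
      by_contra h
      push_neg at h
      exact hk₀ ((Finset.sum_eq_zero_iff_of_nonpos (fun k _ => h k)).mp htrsum k₀
        (Finset.mem_univ _))
    have hj : ∃ j, S j j < 0 := by
      by_contra h
      push_neg at h
      exact hk₀ ((Finset.sum_eq_zero_iff_of_nonneg (fun k _ => h k)).mp htrsum k₀
        (Finset.mem_univ _))
    obtain ⟨i, hi⟩ := hi
    obtain ⟨j, hj⟩ := hj
    have hij : i ≠ j := by
      intro h; rw [h] at hi; linarith
    -- find the rotation angle by the intermediate value theorem
    set f : ℝ → ℝ := fun θ =>
      Real.cos θ ^ 2 * S i i + 2 * Real.cos θ * Real.sin θ * S i j + Real.sin θ ^ 2 * S j j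
      with hfdef
    have hcont : Continuous f := by fun_prop
    obtain ⟨θ, _, hθ⟩ : ∃ θ ∈ Set.Icc 0 (Real.pi / 2), f θ = 0 := by
      have h1 : (0 : ℝ) ≤ Real.pi / 2 := by positivity
      have h0mem : (0 : ℝ) ∈ Set.Icc (f (Real.pi / 2)) (f 0) := by
        constructor
        · simp only [hfdef, Real.cos_pi_div_two, Real.sin_pi_div_two]
          nlinarith
        · simp only [hfdef, Real.cos_zero, Real.sin_zero]
          nlinarith
      obtain ⟨θ, hθ1, hθ2⟩ := intermediate_value_Icc' h1 hcont.continuousOn h0mem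
      exact ⟨θ, hθ1, hθ2⟩
    set c := Real.cos θ with hc
    set s := Real.sin θ with hs
    have hcs : c ^ 2 + s ^ 2 = 1 := by
      rw [hc, hs]; exact Real.cos_sq_add_sin_sq θ
    have hkey : c ^ 2 * S i i + 2 * c * s * S i j + s ^ 2 * S j j = 0 := hθ
    set G := givens i j c s with hG
    set S' := G * S * Gᵀ with hS'def
    have hGGt : G * Gᵀ = 1 := givens_mul_transpose hij hcs
    have hGtG : Gᵀ * G = 1 := mul_eq_one_comm.mp hGGt
    have hS'symm : S'ᵀ = S' := by
      rw [hS'def, Matrix.transpose_mul, Matrix.transpose_mul, Matrix.transpose_transpose, hS,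
        Matrix.mul_assoc]
    have hS'tr : S'.trace = 0 := by
      rw [hS'def, Matrix.trace_mul_cycle, hGtG, Matrix.one_mul, htr]
    have hsym : S j i = S i j := by
      conv_lhs => rw [← hS]
      rfl
    have hS'i : S' i i = 0 := by
      rw [hS'def, mul_givens_transpose_apply hij, if_pos rfl,
        givens_mul_apply hij, givens_mul_apply hij, if_pos rfl, if_pos rfl, hsym]
      nlinarith [hkey]
    have hS'k : ∀ k, k ≠ i → k ≠ j → S' k k = S k k := by
      intro k h1 h2
      rw [hS'def, mul_givens_transpose_apply hij, if_neg h1, if_neg h2,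
        givens_mul_apply hij, if_neg h1, if_neg h2]
    have hiS : i ∈ Finset.univ.filter fun k => S k k ≠ 0 := by simp [hi.ne']
    have hsub : (Finset.univ.filter fun k => S' k k ≠ 0) ⊆
        (Finset.univ.filter fun k => S k k ≠ 0).erase i := by
      intro k hk
      simp only [Finset.mem_filter, Finset.mem_univ, true_and] at hk
      rw [Finset.mem_erase]
      have hki : k ≠ i := by
        intro h; rw [h, hS'i] at hk; exact hk rfl
      refine ⟨hki, ?_⟩
      simp only [Finset.mem_filter, Finset.mem_univ, true_and]
      by_cases h2 : k = j
      · rw [h2]; exact hj.ne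
      · rw [← hS'k k hki h2]; exact hk
    have hcard' : (Finset.univ.filter fun k => S' k k ≠ 0).card ≤ N := by
      have h1 := Finset.card_le_card hsub
      rw [Finset.card_erase_of_mem hiS] at h1
      have h2 : 1 ≤ (Finset.univ.filter fun k => S k k ≠ 0).card :=
        Finset.card_pos.mpr ⟨i, hiS⟩
      omega
    obtain ⟨O', hO'1, hO'2⟩ := ih S' hcard' hS'symm hS'tr
    refine ⟨O' * G, ?_, ?_⟩
    · rw [Matrix.transpose_mul, Matrix.mul_assoc, ← Matrix.mul_assoc G, hGGt, Matrix.one_mul,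
        hO'1]
    · intro k
      have heq : O' * G * S * (O' * G)ᵀ = O' * S' * O'ᵀ := by
        rw [Matrix.transpose_mul, hS'def]
        simp only [Matrix.mul_assoc]
      rw [heq]
      exact hO'2 k

/-- A real symmetric matrix with trace zero can be rotated by an orthogonal matrix
so that all its diagonal entries vanish. -/
theorem traceless_symmetric_zero_diagonal {n : ℕ} (S : Matrix (Fin n) (Fin n) ℝ)
    (hS : Sᵀ = S) (htr : S.trace = 0) :
    ∃ O : Matrix (Fin n) (Fin n) ℝ, O * Oᵀ = 1 ∧ ∀ i, (O * S * Oᵀ) i i = 0 := by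
  exact aux (Finset.univ.filter fun k => S k k ≠ 0).card S le_rfl hS htr
end

section
/- Let (M, c) be the Bloch representation of a positive trace-preserving qubit map, i.e., |M r⃗ + c⃗| ≤ 1 for all unit vectors r⃗ ∈ ℝ³. Then for every vector n ∈ ℝ³, |nᵀc| + |nᵀM| ≤ |n|, where |·| is the Euclidean norm. -/
open Matrix

/-- The Euclidean norm of a vector in `ℝ³`. -/
noncomputable def enorm3 (v : Fin 3 → ℝ) : ℝ := Real.sqrt (∑ i, v i ^ 2)

lemma enorm3_nonneg (v : Fin 3 → ℝ) : 0 ≤ enorm3 v := Real.sqrt_nonneg _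

lemma cs3 (a b : Fin 3 → ℝ) : |∑ i, a i * b i| ≤ enorm3 a * enorm3 b := by
  rw [abs_le]
  constructor
  · have h := Real.sum_mul_le_sqrt_mul_sqrt Finset.univ (fun i => -a i) b
    have e1 : ∑ i, (-a i) * b i = -∑ i, a i * b i := by
      rw [← Finset.sum_neg_distrib]; exact Finset.sum_congr rfl fun i _ => by ring
    have e2 : ∑ i, (-a i) ^ 2 = ∑ i, a i ^ 2 :=
      Finset.sum_congr rfl fun i _ => by ring
    rw [e1, e2] at h
    unfold enorm3
    linarith
  · exact Real.sum_mul_le_sqrt_mul_sqrt Finset.univ a b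

/-- If `(M, c)` is the Bloch representation of a positive trace-preserving qubit map,
i.e. `|M r + c| ≤ 1` for all unit vectors `r`, then for all `n ∈ ℝ³`,
`|nᵀ c| + |nᵀ M| ≤ |n|`. -/
theorem bloch_positive_row_bound (M : Matrix (Fin 3) (Fin 3) ℝ) (c : Fin 3 → ℝ)
    (hpos : ∀ r : Fin 3 → ℝ, enorm3 r = 1 → enorm3 (M.mulVec r + c) ≤ 1) :
    ∀ n : Fin 3 → ℝ, |∑ i, n i * c i| + enorm3 (vecMul n M) ≤ enorm3 n := by
  intro n
  set v : Fin 3 → ℝ := vecMul n M with hv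
  set L : ℝ := enorm3 v with hL
  set t : ℝ := ∑ i, n i * c i with ht
  -- key: for a unit vector r, |v ⬝ r + t| ≤ enorm3 n
  have key : ∀ r : Fin 3 → ℝ, enorm3 r = 1 →
      |(∑ i, v i * r i) + t| ≤ enorm3 n := by
    intro r hr
    have h1 : ∑ i, n i * (M.mulVec r + c) i = (∑ i, v i * r i) + t := by
      simp only [Pi.add_apply, mul_add, Finset.sum_add_distrib]
      congr 1
      exact dotProduct_mulVec n M r
    have h2 := cs3 n (M.mulVec r + c)
    have h3 := hpos r hr
    have h4 : enorm3 n * enorm3 (M.mulVec r + c) ≤ enorm3 n * 1 :=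
      mul_le_mul_of_nonneg_left h3 (enorm3_nonneg n)
    rw [h1] at h2
    linarith
  by_cases hvz : v = 0
  · have hL0 : L = 0 := by simp [hL, hvz, enorm3]
    have hr : enorm3 (fun i : Fin 3 => if i = 0 then (1:ℝ) else 0) = 1 := by
      simp [enorm3, Fin.sum_univ_three]
    have hk := key _ hr
    rw [hvz] at hk
    simp only [Pi.zero_apply, zero_mul, Finset.sum_const_zero, zero_add] at hk
    rw [hL0]
    linarith
  · have hLpos : 0 < L := by
      rcases (enorm3_nonneg v).lt_or_eq with h | h
      · exact h
      · exfalso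
        apply hvz
        have hle : ∑ i, v i ^ 2 ≤ 0 := Real.sqrt_eq_zero'.mp h.symm
        have h0 : ∑ i, v i ^ 2 = 0 :=
          le_antisymm hle (Finset.sum_nonneg fun i _ => sq_nonneg _)
        funext i
        have hi : v i ^ 2 = 0 :=
          (Finset.sum_eq_zero_iff_of_nonneg fun j _ => sq_nonneg (v j)).mp h0 i
            (Finset.mem_univ i)
        exact pow_eq_zero_iff (two_ne_zero) |>.mp hi
    have hL2 : ∑ i, v i ^ 2 = L ^ 2 := by
      rw [hL, enorm3, Real.sq_sqrt (Finset.sum_nonneg fun i _ => sq_nonneg _)]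
    set s : ℝ := if 0 ≤ t then 1 else -1 with hs
    have hs2 : s ^ 2 = 1 := by
      rcases le_or_gt 0 t with h | h
      · simp [hs, h]
      · simp [hs, not_le.mpr h]
    set r : Fin 3 → ℝ := fun i => s * v i / L with hrdef
    have hsum : ∑ i, v i * r i = s * L := by
      have e : ∀ i, v i * r i = s * v i ^ 2 / L := by
        intro i; rw [hrdef]; ring
      rw [Finset.sum_congr rfl fun i _ => e i, ← Finset.sum_div, ← Finset.mul_sum, hL2]
      field_simp
    have hrnorm : enorm3 r = 1 := by
      rw [enorm3]
      have e : ∀ i, r i ^ 2 = s ^ 2 * v i ^ 2 / L ^ 2 := by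
        intro i; rw [hrdef]; ring
      rw [Finset.sum_congr rfl fun i _ => e i]
      simp only [hs2, one_mul]
      rw [← Finset.sum_div, hL2, div_self (by positivity), Real.sqrt_one]
    have hkey := key r hrnorm
    rw [hsum] at hkey
    rcases le_or_gt 0 t with h | h
    · simp only [hs, if_pos h, one_mul] at hkey
      rw [abs_of_nonneg (by linarith : (0:ℝ) ≤ L + t)] at hkey
      rw [abs_of_nonneg h]; linarith
    · simp only [hs, if_neg (not_le.mpr h), neg_one_mul] at hkey
      rw [abs_of_neg (by linarith : -L + t < 0)] at hkey
      rw [abs_of_neg h]; linarith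
end

section
/- Let M be a 3×3 real matrix and c ∈ ℝ³ such that |M r⃗ + c⃗| ≤ 1 for all unit vectors r⃗ (positivity of the associated qubit map). Then for every 3×3 real matrix K, |Kc| + ‖KM‖_2 ≤ ‖K‖_2, where ‖·‖_2 denotes the Frobenius (Hilbert–Schmidt) norm and |Kc| the Euclidean norm. -/
open Matrix

/-- The Frobenius (Hilbert–Schmidt) norm of a `3 × 3` real matrix. -/
noncomputable def frob (A : Matrix (Fin 3) (Fin 3) ℝ) : ℝ :=
  Real.sqrt (∑ i, ∑ j, A i j ^ 2)

namespace BlochAux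

lemma sumsq_nonneg (v : Fin 3 → ℝ) : 0 ≤ ∑ i, v i ^ 2 :=
  Finset.sum_nonneg fun i _ => sq_nonneg _

lemma enorm3_nonneg (v : Fin 3 → ℝ) : 0 ≤ enorm3 v := Real.sqrt_nonneg _

lemma enorm3_sq (v : Fin 3 → ℝ) : enorm3 v ^ 2 = ∑ i, v i ^ 2 :=
  Real.sq_sqrt (sumsq_nonneg v)

lemma frob_nonneg (A : Matrix (Fin 3) (Fin 3) ℝ) : 0 ≤ frob A := Real.sqrt_nonneg _

lemma frob_sq (A : Matrix (Fin 3) (Fin 3) ℝ) : frob A ^ 2 = ∑ i, ∑ j, A i j ^ 2 :=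
  Real.sq_sqrt (Finset.sum_nonneg fun i _ => Finset.sum_nonneg fun j _ => sq_nonneg _)

/-- Cauchy–Schwarz. -/
lemma cs3 (f g : Fin 3 → ℝ) : (∑ i, f i * g i) ^ 2 ≤ (∑ i, f i ^ 2) * (∑ i, g i ^ 2) :=
  Finset.sum_mul_sq_le_sq_mul_sq Finset.univ f g

lemma vecMul_dot (M : Matrix (Fin 3) (Fin 3) ℝ) (c θ : Fin 3 → ℝ) :
    ∑ i, (c ᵥ* M) i * θ i = ∑ j, M.mulVec θ j * c j := by
  simp only [Matrix.vecMul, Matrix.mulVec, dotProduct, Finset.sum_mul,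
    Finset.mul_sum]
  rw [Finset.sum_comm]
  refine Finset.sum_congr rfl fun j _ => Finset.sum_congr rfl fun i _ => by ring

/-- Cauchy–Schwarz over the 9 entries. -/
lemma cs9 (f g : Fin 3 → Fin 3 → ℝ) :
    (∑ i, ∑ j, f i j * g i j) ^ 2 ≤ (∑ i, ∑ j, f i j ^ 2) * (∑ i, ∑ j, g i j ^ 2) := by
  have h := Finset.sum_mul_sq_le_sq_mul_sq (Finset.univ : Finset (Fin 3 × Fin 3))
    (fun p => f p.1 p.2) (fun p => g p.1 p.2)
  simpa [Fintype.sum_prod_type] using h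

/-- Pointwise consequence of positivity:
`|Mθ|² + 2|h·θ||θ| + |c|²|θ|² ≤ |θ|²` with `h = Mᵀ c`. -/
lemma pointwise (M : Matrix (Fin 3) (Fin 3) ℝ) (c : Fin 3 → ℝ)
    (hpos : ∀ r : Fin 3 → ℝ, enorm3 r = 1 → enorm3 (M.mulVec r + c) ≤ 1)
    (θ : Fin 3 → ℝ) :
    (∑ j, (M.mulVec θ j) ^ 2) + 2 * |∑ i, (c ᵥ* M) i * θ i| * enorm3 θ
      + (∑ i, c i ^ 2) * (∑ i, θ i ^ 2) ≤ ∑ i, θ i ^ 2 := by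
  rw [vecMul_dot M c θ]
  -- unit-sphere version
  have unit : ∀ r : Fin 3 → ℝ, enorm3 r = 1 →
      (∑ j, (M.mulVec r j) ^ 2) + 2 * |∑ j, M.mulVec r j * c j| + (∑ i, c i ^ 2) ≤ 1 := by
    intro r hr
    have hneg : enorm3 (-r) = 1 := by
      unfold enorm3 at hr ⊢
      simpa using hr
    have sq1 : ∑ j, (M.mulVec r j + c j) ^ 2 ≤ 1 := by
      have h1 := hpos r hr
      have h2 : enorm3 (M.mulVec r + c) ^ 2 ≤ 1 := by
        nlinarith [enorm3_nonneg (M.mulVec r + c)]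
      rw [enorm3_sq] at h2
      simpa using h2
    have sq2 : ∑ j, (-(M.mulVec r j) + c j) ^ 2 ≤ 1 := by
      have h1 := hpos (-r) hneg
      have h2 : enorm3 (M.mulVec (-r) + c) ^ 2 ≤ 1 := by
        nlinarith [enorm3_nonneg (M.mulVec (-r) + c)]
      rw [enorm3_sq] at h2
      have hmv : ∀ j, M.mulVec (-r) j = -(M.mulVec r j) := by
        intro j
        simp [Matrix.mulVec, dotProduct, Finset.sum_neg_distrib]
      calc ∑ j, (-(M.mulVec r j) + c j) ^ 2
          = ∑ j, ((M.mulVec (-r) + c) j) ^ 2 := by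
            refine Finset.sum_congr rfl fun j _ => by rw [Pi.add_apply, hmv j]
        _ ≤ 1 := h2
    have e1 : ∑ j, (M.mulVec r j + c j) ^ 2
        = (∑ j, (M.mulVec r j) ^ 2) + 2 * (∑ j, M.mulVec r j * c j) + ∑ i, c i ^ 2 := by
      rw [Finset.mul_sum, ← Finset.sum_add_distrib, ← Finset.sum_add_distrib]
      exact Finset.sum_congr rfl fun j _ => by ring
    have e2 : ∑ j, (-(M.mulVec r j) + c j) ^ 2
        = (∑ j, (M.mulVec r j) ^ 2) - 2 * (∑ j, M.mulVec r j * c j) + ∑ i, c i ^ 2 := by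
      rw [Finset.mul_sum, ← Finset.sum_sub_distrib, ← Finset.sum_add_distrib]
      exact Finset.sum_congr rfl fun j _ => by ring
    rw [e1] at sq1
    rw [e2] at sq2
    rcases abs_cases (∑ j, M.mulVec r j * c j) with ⟨h, _⟩ | ⟨h, _⟩ <;> rw [h] <;> linarith
  -- scale
  rcases eq_or_ne θ 0 with h0 | h0
  · subst h0
    simp [Matrix.mulVec, dotProduct, enorm3]
  · have hS0 : 0 < ∑ i, θ i ^ 2 := by
      rcases Function.ne_iff.mp h0 with ⟨i, hi⟩
      have : 0 < θ i ^ 2 := pow_pos (abs_pos.mpr hi) 2 |>.trans_le (by rw [sq_abs])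
      exact Finset.sum_pos' (fun j _ => sq_nonneg _) ⟨i, Finset.mem_univ i, this⟩
    set e := enorm3 θ with hedef
    have he2 : e ^ 2 = ∑ i, θ i ^ 2 := enorm3_sq θ
    have he0 : 0 < e := Real.sqrt_pos.mpr hS0
    have hne : e ≠ 0 := ne_of_gt he0
    set r : Fin 3 → ℝ := e⁻¹ • θ with hrdef
    have hr1 : enorm3 r = 1 := by
      unfold enorm3
      have : ∑ i, (e⁻¹ * θ i) ^ 2 = e⁻¹ ^ 2 * ∑ i, θ i ^ 2 := by
        rw [Finset.mul_sum]
        exact Finset.sum_congr rfl fun i _ => by ring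
      have hsum : ∑ i, r i ^ 2 = 1 := by
        rw [hrdef]
        simp only [Pi.smul_apply, smul_eq_mul]
        rw [this, ← he2]
        field_simp
      rw [hsum, Real.sqrt_one]
    have hMr : ∀ j, M.mulVec r j = e⁻¹ * M.mulVec θ j := by
      intro j
      rw [hrdef, Matrix.mulVec_smul]
      simp
    have P := unit r hr1
    have hA : ∑ j, (M.mulVec r j) ^ 2 = e⁻¹ ^ 2 * ∑ j, (M.mulVec θ j) ^ 2 := by
      rw [Finset.mul_sum]
      exact Finset.sum_congr rfl fun j _ => by rw [hMr j]; ring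
    have hD : ∑ j, M.mulVec r j * c j = e⁻¹ * ∑ j, M.mulVec θ j * c j := by
      rw [Finset.mul_sum]
      exact Finset.sum_congr rfl fun j _ => by rw [hMr j]; ring
    rw [hA, hD] at P
    have habs : |e⁻¹ * ∑ j, M.mulVec θ j * c j| = e⁻¹ * |∑ j, M.mulVec θ j * c j| := by
      rw [abs_mul, abs_of_nonneg (le_of_lt (inv_pos.mpr he0))]
    rw [habs] at P
    have Pm := mul_le_mul_of_nonneg_left P (sq_nonneg e)
    have heq : e ^ 2 * (e⁻¹ ^ 2 * (∑ j, (M.mulVec θ j) ^ 2)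
        + 2 * (e⁻¹ * |∑ j, M.mulVec θ j * c j|) + (∑ i, c i ^ 2))
        = (∑ j, (M.mulVec θ j) ^ 2) + 2 * |∑ j, M.mulVec θ j * c j| * e
          + (∑ i, c i ^ 2) * e ^ 2 := by
      field_simp
    rw [heq, mul_one, he2] at Pm
    exact Pm

set_option maxHeartbeats 1000000 in
/-- Scalar existence of the certificate parameter `ν`. -/
lemma exists_nu (α h : Fin 3 → ℝ) (hα0 : ∀ i, 0 ≤ α i)
    (H : ∀ θ : Fin 3 → ℝ,
      2 * |∑ i, h i * θ i| * Real.sqrt (∑ i, θ i ^ 2) ≤ ∑ i, α i * θ i ^ 2) :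
    ∃ ν, 0 ≤ ν ∧ (∀ i, ν ≤ α i) ∧
      ∀ x : Fin 3 → ℝ, (∑ i, h i * x i) ^ 2 ≤ ν * ∑ i, (α i - ν) * x i ^ 2 := by
  classical
  have hbase : ∀ i, 2 * |h i| ≤ α i := by
    intro i
    have hH : 2 * |∑ k, h k * (if k = i then (1:ℝ) else 0)| *
        Real.sqrt (∑ k, (if k = i then (1:ℝ) else 0) ^ 2)
        ≤ ∑ k, α k * (if k = i then (1:ℝ) else 0) ^ 2 := H _
    have E1 : ∑ k, h k * (if k = i then (1:ℝ) else 0) = h i := by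
      rw [Finset.sum_congr rfl fun k _ => (by split <;> simp [*] :
        h k * (if k = i then (1:ℝ) else 0) = if k = i then h k else 0)]
      simp
    have E2 : ∑ k, (if k = i then (1:ℝ) else 0) ^ 2 = 1 := by
      rw [Finset.sum_congr rfl fun k _ => (by split <;> simp :
        ((if k = i then (1:ℝ) else 0)) ^ 2 = if k = i then 1 else 0)]
      simp
    have E3 : ∑ k, α k * (if k = i then (1:ℝ) else 0) ^ 2 = α i := by
      have hterm : ∀ k, α k * ((if k = i then (1:ℝ) else 0)) ^ 2 = if k = i then α k else 0 := by
        intro k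
        by_cases hk : k = i
        · rw [if_pos hk, if_pos hk, one_pow, mul_one]
        · rw [if_neg hk, if_neg hk]
          ring
      rw [Finset.sum_congr rfl fun k _ => hterm k]
      simp
    rw [E1, E2, E3, Real.sqrt_one, mul_one] at hH
    exact hH
  by_cases hh : ∀ i, h i = 0
  · refine ⟨0, le_rfl, fun i => hα0 i, fun x => ?_⟩
    simp [hh]
  push_neg at hh
  obtain ⟨i₀, hi₀⟩ := hh
  set R : Finset (Fin 3) := Finset.univ.filter (fun i => h i ≠ 0) with hR
  have hmemR : ∀ i, h i ≠ 0 → i ∈ R := fun i hi => by simp [hR, hi]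
  have hmemR' : ∀ i, i ∈ R → h i ≠ 0 := fun i hi => (Finset.mem_filter.mp hi).2
  have hRne : R.Nonempty := ⟨i₀, hmemR i₀ hi₀⟩
  set ab := R.inf' hRne α with hab
  set m := Finset.univ.inf' Finset.univ_nonempty α with hm
  have hmle : ∀ i, m ≤ α i := fun i => Finset.inf'_le α (Finset.mem_univ i)
  have hable : ∀ i, i ∈ R → ab ≤ α i := fun i hi => Finset.inf'_le α hi
  have hm0 : 0 ≤ m := Finset.le_inf' _ _ (fun i _ => hα0 i)
  have hmab : m ≤ ab := Finset.le_inf' _ _ (fun i _ => hmle i)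
  have hRpos : ∀ i, i ∈ R → 0 < α i := by
    intro i hi
    have habs : 0 < |h i| := abs_pos.mpr (hmemR' i hi)
    linarith [hbase i]
  have hab0 : 0 < ab := by
    obtain ⟨iR, hiR, habeq⟩ := Finset.exists_mem_eq_inf' hRne α
    rw [hab, habeq]; exact hRpos iR hiR
  set g : ℝ → ℝ := fun ν => ∑ i, h i ^ 2 / (α i - ν) ^ 2 with hg
  set f : ℝ → ℝ := fun ν => ∑ i, h i ^ 2 / (α i - ν) with hf
  have hfnn : ∀ ν, (∀ i, ν ≤ α i) → 0 ≤ f ν := by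
    intro ν hν
    exact Finset.sum_nonneg fun i _ => div_nonneg (sq_nonneg _) (by linarith [hν i])
  -- certificate from `f ν ≤ ν`
  have cert : ∀ ν, 0 ≤ ν → (∀ i, ν ≤ α i) → (∀ i, i ∈ R → ν < α i) → f ν ≤ ν →
      ∀ x : Fin 3 → ℝ, (∑ i, h i * x i) ^ 2 ≤ ν * ∑ i, (α i - ν) * x i ^ 2 := by
    intro ν hν0 hνle hνlt hfν x
    have e1 : ∀ i, h i / Real.sqrt (α i - ν) * (Real.sqrt (α i - ν) * x i) = h i * x i := by
      intro i
      by_cases hi : h i = 0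
      · simp [hi]
      · have hd : (0:ℝ) < α i - ν := sub_pos.mpr (hνlt i (hmemR i hi))
        have hs : Real.sqrt (α i - ν) ≠ 0 := by positivity
        field_simp
    have e2 : ∀ i, (h i / Real.sqrt (α i - ν)) ^ 2 = h i ^ 2 / (α i - ν) := by
      intro i
      rw [div_pow, Real.sq_sqrt (sub_nonneg.mpr (hνle i))]
    have e3 : ∀ i, (Real.sqrt (α i - ν) * x i) ^ 2 = (α i - ν) * x i ^ 2 := by
      intro i
      rw [mul_pow, Real.sq_sqrt (sub_nonneg.mpr (hνle i))]
    have hcs : (∑ i, h i * x i) ^ 2 ≤ f ν * ∑ i, (α i - ν) * x i ^ 2 := by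
      calc (∑ i, h i * x i) ^ 2
          = (∑ i, h i / Real.sqrt (α i - ν) * (Real.sqrt (α i - ν) * x i)) ^ 2 := by
            rw [Finset.sum_congr rfl fun i _ => e1 i]
        _ ≤ (∑ i, (h i / Real.sqrt (α i - ν)) ^ 2) * ∑ i, (Real.sqrt (α i - ν) * x i) ^ 2 :=
            cs3 _ _
        _ = f ν * ∑ i, (α i - ν) * x i ^ 2 := by
            rw [Finset.sum_congr rfl fun i _ => e2 i, Finset.sum_congr rfl fun i _ => e3 i]
    refine le_trans hcs (mul_le_mul_of_nonneg_right hfν ?_)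
    exact Finset.sum_nonneg fun i _ => mul_nonneg (sub_nonneg.mpr (hνle i)) (sq_nonneg _)
  by_cases hcase : ∃ ν₀, 0 ≤ ν₀ ∧ ν₀ ≤ m ∧ ν₀ < ab ∧ 1 ≤ g ν₀
  · -- Case 1 : IVT
    obtain ⟨ν₀, hν₀0, hν₀m, hν₀ab, hν₀g⟩ := hcase
    have hcont : ContinuousOn g (Set.Icc 0 ν₀) := by
      apply continuousOn_finset_sum
      intro i _
      by_cases hi : h i = 0
      · simpa [hi] using (continuousOn_const :
          ContinuousOn (fun _ : ℝ => (0:ℝ)) (Set.Icc 0 ν₀))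
      · apply ContinuousOn.div continuousOn_const
        · exact ((continuous_const.sub continuous_id).pow 2).continuousOn
        · intro x hx
          have h1 : ab ≤ α i := hable i (hmemR i hi)
          have h2 : x ≤ ν₀ := hx.2
          have : 0 < α i - x := by linarith
          positivity
    have hg0 : g 0 < 1 := by
      have hb : ∀ i ∈ (Finset.univ : Finset (Fin 3)), h i ^ 2 / (α i - 0) ^ 2 ≤ 1/4 := by
        intro i _
        by_cases hi : h i = 0
        · simp [hi]
        · have b := hbase i
          have hαpos : 0 < α i := hRpos i (hmemR i hi)
          rw [sub_zero, div_le_iff₀ (by positivity)]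
          nlinarith [abs_nonneg (h i), sq_abs (h i)]
      calc g 0 ≤ ∑ _i : Fin 3, (1:ℝ)/4 := Finset.sum_le_sum hb
        _ < 1 := by norm_num
    obtain ⟨ν, hνmem, hgν⟩ := intermediate_value_Icc hν₀0 hcont ⟨le_of_lt hg0, hν₀g⟩
    have hν0 : 0 ≤ ν := hνmem.1
    have hνle : ∀ i, ν ≤ α i := fun i => le_trans (le_trans hνmem.2 hν₀m) (hmle i)
    have hνlt : ∀ i, i ∈ R → ν < α i := fun i hi =>
      lt_of_le_of_lt hνmem.2 (lt_of_lt_of_le hν₀ab (hable i hi))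
    have hfν : f ν ≤ ν := by
      have hθ : 2 * |∑ i, h i * (h i / (α i - ν))| *
          Real.sqrt (∑ i, (h i / (α i - ν)) ^ 2) ≤ ∑ i, α i * (h i / (α i - ν)) ^ 2 := H _
      have E1 : ∑ i, h i * (h i / (α i - ν)) = f ν :=
        Finset.sum_congr rfl fun i _ => by rw [pow_two, mul_div_assoc]
      have E2 : ∑ i, (h i / (α i - ν)) ^ 2 = g ν :=
        Finset.sum_congr rfl fun i _ => div_pow _ _ 2
      have E3 : ∑ i, α i * (h i / (α i - ν)) ^ 2 = f ν + ν * g ν := by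
        rw [hf, hg]
        simp only
        rw [Finset.mul_sum, ← Finset.sum_add_distrib]
        refine Finset.sum_congr rfl fun i _ => ?_
        by_cases hi : h i = 0
        · simp [hi]
        · have hd : α i - ν ≠ 0 := ne_of_gt (sub_pos.mpr (hνlt i (hmemR i hi)))
          rw [div_pow]
          field_simp
          ring
      rw [E1, E2, E3, hgν] at hθ
      rw [Real.sqrt_one, abs_of_nonneg (hfnn ν hνle)] at hθ
      linarith
    exact ⟨ν, hν0, hνle, cert ν hν0 hνle hνlt hfν⟩
  · -- Case 2
    push_neg at hcase
    have hmab' : m < ab := by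
      rcases lt_or_ge m ab with h' | h'
      · exact h'
      · exfalso
        obtain ⟨iR, hiR, habeq⟩ := Finset.exists_mem_eq_inf' hRne α
        have hhiR : h iR ≠ 0 := hmemR' iR hiR
        have habs : 0 < |h iR| := abs_pos.mpr hhiR
        have habR : ab = α iR := by rw [hab, habeq]
        set ν₁ := max 0 (ab - |h iR|) with hν₁
        have hν₁0 : 0 ≤ ν₁ := le_max_left _ _
        have hν₁ab : ν₁ < ab := by
          apply max_lt hab0
          linarith
        have hν₁m : ν₁ ≤ m := le_trans (le_of_lt hν₁ab) h'
        have hlt := hcase ν₁ hν₁0 hν₁m hν₁ab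
        have hterm : (1:ℝ) ≤ h iR ^ 2 / (α iR - ν₁) ^ 2 := by
          rcases le_or_gt ab (|h iR|) with hc | hc
          · have hz : ν₁ = 0 := by
              rw [hν₁, max_eq_left]
              linarith
            rw [hz, sub_zero, le_div_iff₀ (pow_pos (hRpos iR hiR) 2)]
            nlinarith [sq_abs (h iR), hRpos iR hiR]
          · have hz : ν₁ = ab - |h iR| := by
              rw [hν₁, max_eq_right]
              linarith
            rw [hz, show α iR - (ab - |h iR|) = |h iR| by rw [habR]; ring, sq_abs,
              div_self (pow_ne_zero 2 hhiR)]
        have hsum : h iR ^ 2 / (α iR - ν₁) ^ 2 ≤ g ν₁ := by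
          show _ ≤ ∑ i, h i ^ 2 / (α i - ν₁) ^ 2
          exact Finset.single_le_sum (f := fun i => h i ^ 2 / (α i - ν₁) ^ 2)
            (fun i _ => div_nonneg (sq_nonneg _) (sq_nonneg _)) (Finset.mem_univ iR)
        linarith
    obtain ⟨j, _, hjeq⟩ := Finset.exists_mem_eq_inf' Finset.univ_nonempty α
    have hmj : m = α j := by rw [hm, hjeq]
    have hhj : h j = 0 := by
      by_contra hj
      have h1 : ab ≤ α j := hable j (hmemR j hj)
      rw [← hmj] at h1
      linarith
    have hgm : g m < 1 := hcase m hm0 le_rfl hmab'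
    have hνlt : ∀ i, i ∈ R → m < α i := fun i hi => lt_of_lt_of_le hmab' (hable i hi)
    -- identity at ν = m
    have E1m : ∑ i, h i * (h i / (α i - m)) = f m :=
      Finset.sum_congr rfl fun i _ => by rw [pow_two, mul_div_assoc]
    have E3m : ∑ i, α i * (h i / (α i - m)) ^ 2 = f m + m * g m := by
      rw [hf, hg]
      simp only
      rw [Finset.mul_sum, ← Finset.sum_add_distrib]
      refine Finset.sum_congr rfl fun i _ => ?_
      by_cases hi : h i = 0
      · simp [hi]
      · have hd : α i - m ≠ 0 := ne_of_gt (sub_pos.mpr (hνlt i (hmemR i hi)))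
        rw [div_pow]
        field_simp
        ring
    have hfm : f m ≤ m := by
      by_contra hcon
      push_neg at hcon
      have hf0 : 0 < f m := lt_of_le_of_lt hm0 hcon
      set s := max 1 (f m / m) with hs
      have hs1 : (1:ℝ) ≤ s := le_max_left _ _
      have hs0 : (0:ℝ) < s := lt_of_lt_of_le one_pos hs1
      have hsg : g m < s ^ 2 := lt_of_lt_of_le hgm (by nlinarith)
      set cδ := Real.sqrt (s ^ 2 - g m) with hcδ
      have hcδ2 : cδ ^ 2 = s ^ 2 - g m := Real.sq_sqrt (by linarith)
      set θ : Fin 3 → ℝ := Function.update (fun i => h i / (α i - m)) j cδ with hθdef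
      have hS1 : ∑ i, h i * θ i = f m := by
        have hfun : (fun i => h i * θ i)
            = Function.update (fun i => h i * (h i / (α i - m))) j (h j * cδ) := by
          funext i
          by_cases hij : i = j
          · subst hij; simp [hθdef, Function.update_self]
          · simp [hθdef, Function.update_of_ne hij]
        rw [hfun, Finset.sum_update_of_mem (Finset.mem_univ j),
          Finset.sdiff_singleton_eq_erase,
          Finset.sum_erase_eq_sub (Finset.mem_univ j), E1m]
        simp [hhj]
      have hS2 : ∑ i, θ i ^ 2 = s ^ 2 := by
        have hfun : (fun i => θ i ^ 2)
            = Function.update (fun i => (h i / (α i - m)) ^ 2) j (cδ ^ 2) := by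
          funext i
          by_cases hij : i = j
          · subst hij; simp [hθdef, Function.update_self]
          · simp [hθdef, Function.update_of_ne hij]
        rw [hfun, Finset.sum_update_of_mem (Finset.mem_univ j),
          Finset.sdiff_singleton_eq_erase,
          Finset.sum_erase_eq_sub (Finset.mem_univ j)]
        have : ∑ i, (h i / (α i - m)) ^ 2 = g m :=
          Finset.sum_congr rfl fun i _ => div_pow _ _ 2
        rw [this, hcδ2]
        simp [hhj]
      have hS3 : ∑ i, α i * θ i ^ 2 = f m + m * s ^ 2 := by
        have hfun : (fun i => α i * θ i ^ 2)
            = Function.update (fun i => α i * (h i / (α i - m)) ^ 2) j (α j * cδ ^ 2) := by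
          funext i
          by_cases hij : i = j
          · subst hij; simp [hθdef, Function.update_self]
          · simp [hθdef, Function.update_of_ne hij]
        rw [hfun, Finset.sum_update_of_mem (Finset.mem_univ j),
          Finset.sdiff_singleton_eq_erase,
          Finset.sum_erase_eq_sub (Finset.mem_univ j), E3m]
        rw [hcδ2, ← hmj]
        simp [hhj]
        ring
      have hθH : 2 * |∑ i, h i * θ i| * Real.sqrt (∑ i, θ i ^ 2) ≤ ∑ i, α i * θ i ^ 2 := H θ
      rw [hS1, hS2, hS3, abs_of_nonneg (le_of_lt hf0), Real.sqrt_sq (le_of_lt hs0)] at hθH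
      rcases le_or_gt (f m / m) 1 with hc1 | hc1
      · have hsm : s = 1 := max_eq_left hc1
        rw [hsm] at hθH
        nlinarith
      · have hm00 : 0 < m := by
          rcases eq_or_lt_of_le hm0 with h0 | h0
          · exfalso
            rw [← h0, div_zero] at hc1
            linarith
          · exact h0
        have hsm : s = f m / m := max_eq_right (le_of_lt hc1)
        rw [hsm] at hθH
        have hmne : m ≠ 0 := ne_of_gt hm00
        have h2 : 2 * f m * (f m / m) = 2 * f m ^ 2 / m := by field_simp
        have h3 : f m + m * (f m / m) ^ 2 = f m + f m ^ 2 / m := by field_simp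
        rw [h2, h3] at hθH
        have hθH' := mul_le_mul_of_nonneg_left hθH (le_of_lt hm00)
        have h4 : m * (2 * f m ^ 2 / m) = 2 * f m ^ 2 := by field_simp
        have h5 : m * (f m + f m ^ 2 / m) = m * f m + f m ^ 2 := by field_simp
        rw [h4, h5] at hθH'
        nlinarith [mul_pos (sub_pos.mpr hcon) hf0]
    exact ⟨m, hm0, hmle, cert m hm0 hmle hνlt hfm⟩

/-- The certificate. -/
lemma exists_cert (M : Matrix (Fin 3) (Fin 3) ℝ) (c : Fin 3 → ℝ)
    (hpos : ∀ r : Fin 3 → ℝ, enorm3 r = 1 → enorm3 (M.mulVec r + c) ≤ 1) :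
    ∃ μ ν : ℝ, 0 ≤ μ ∧ 0 ≤ ν ∧ μ + ν = 1 - ∑ i, c i ^ 2 ∧
      (∀ x : Fin 3 → ℝ, (∑ j, (M.mulVec x j) ^ 2) ≤ μ * ∑ i, x i ^ 2) ∧
      (∀ x : Fin 3 → ℝ, (∑ i, (c ᵥ* M) i * x i) ^ 2
        ≤ ν * (μ * (∑ i, x i ^ 2) - ∑ j, (M.mulVec x j) ^ 2)) := by
  classical
  have hGher : (Mᵀ * M).IsHermitian := by
    unfold Matrix.IsHermitian
    ext i j
    simp only [Matrix.conjTranspose_apply, Matrix.mul_apply, Matrix.transpose_apply, star_trivial]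
    exact Finset.sum_congr rfl fun k _ => by ring
  have hGT : (Mᵀ * M)ᵀ = Mᵀ * M := by
    rw [Matrix.transpose_mul, Matrix.transpose_transpose]
  set γ : Fin 3 → ℝ := hGher.eigenvalues with hγ
  set v : Fin 3 → (Fin 3 → ℝ) :=
    fun i => (WithLp.equiv 2 (Fin 3 → ℝ)) (hGher.eigenvectorBasis i) with hv
  have heig : ∀ i, (Mᵀ * M) *ᵥ (v i) = γ i • v i := fun i => hGher.mulVec_eigenvectorBasis i
  have hortho : ∀ i k, (∑ j, v i j * v k j) = if i = k then 1 else 0 := by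
    intro i k
    have h := orthonormal_iff_ite.mp hGher.eigenvectorBasis.orthonormal i k
    rw [PiLp.inner_apply] at h
    simp only [RCLike.inner_apply, starRingEnd_apply, star_trivial] at h
    convert h using 2
    exact mul_comm _ _
  have hsum_apply : ∀ (w : Fin 3 → EuclideanSpace ℝ (Fin 3)) (j : Fin 3),
      (∑ i, w i) j = ∑ i, w i j := fun w j => by
    rw [WithLp.ofLp_sum]; exact Finset.sum_apply j Finset.univ (fun i => (w i).ofLp)
  have hsmul_apply : ∀ (a : ℝ) (y : EuclideanSpace ℝ (Fin 3)) (j : Fin 3),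
      (a • y) j = a * y j := fun a y j => rfl
  have hinner_eq : ∀ (i : Fin 3) (x : Fin 3 → ℝ),
      (inner ℝ (hGher.eigenvectorBasis i) ((WithLp.equiv 2 (Fin 3 → ℝ)).symm x) : ℝ)
        = ∑ l, v i l * x l := by
    intro i x
    rw [PiLp.inner_apply]
    refine Finset.sum_congr rfl fun l _ => ?_
    simp only [RCLike.inner_apply, starRingEnd_apply, star_trivial]
    exact mul_comm _ _
  have hexpand : ∀ (x : Fin 3 → ℝ) (j : Fin 3),
      x j = ∑ i, (∑ l, v i l * x l) * v i j := by
    intro x j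
    have h0 := hGher.eigenvectorBasis.sum_repr' ((WithLp.equiv 2 (Fin 3 → ℝ)).symm x)
    have h1 := congrFun (congrArg (WithLp.equiv 2 (Fin 3 → ℝ)) h0) j
    simp only [Equiv.apply_symm_apply] at h1
    have h2 : (WithLp.equiv 2 (Fin 3 → ℝ))
        (∑ i, (inner ℝ (hGher.eigenvectorBasis i) ((WithLp.equiv 2 (Fin 3 → ℝ)).symm x) : ℝ)
          • hGher.eigenvectorBasis i) j
        = ∑ i, (∑ l, v i l * x l) * v i j := by
      have h3 : (WithLp.equiv 2 (Fin 3 → ℝ))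
          (∑ i, (inner ℝ (hGher.eigenvectorBasis i) ((WithLp.equiv 2 (Fin 3 → ℝ)).symm x) : ℝ)
            • hGher.eigenvectorBasis i) j
          = (∑ i, (inner ℝ (hGher.eigenvectorBasis i) ((WithLp.equiv 2 (Fin 3 → ℝ)).symm x) : ℝ)
            • hGher.eigenvectorBasis i) j := rfl
      rw [h3, hsum_apply]
      refine Finset.sum_congr rfl fun i _ => ?_
      rw [hsmul_apply, hinner_eq]
      rfl
    rw [← h1, h2]
  -- bilinear expansion
  have bilin : ∀ (w x : Fin 3 → ℝ),
      ∑ l, w l * x l = ∑ i, (∑ l, w l * v i l) * (∑ l, v i l * x l) := by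
    intro w x
    calc ∑ l, w l * x l
        = ∑ l, w l * (∑ i, (∑ k, v i k * x k) * v i l) :=
          Finset.sum_congr rfl fun l _ => by rw [← hexpand x l]
      _ = ∑ l, ∑ i, (∑ k, v i k * x k) * (w l * v i l) := by
          refine Finset.sum_congr rfl fun l _ => ?_
          rw [Finset.mul_sum]
          exact Finset.sum_congr rfl fun i _ => by ring
      _ = ∑ i, ∑ l, (∑ k, v i k * x k) * (w l * v i l) := Finset.sum_comm
      _ = ∑ i, (∑ l, w l * v i l) * (∑ l, v i l * x l) := by
          refine Finset.sum_congr rfl fun i _ => ?_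
          rw [← Finset.mul_sum]
          ring
  have parseval : ∀ x : Fin 3 → ℝ, ∑ l, x l ^ 2 = ∑ i, (∑ l, v i l * x l) ^ 2 := by
    intro x
    calc ∑ l, x l ^ 2 = ∑ l, x l * x l := Finset.sum_congr rfl fun l _ => sq (x l) ▸ by ring
      _ = ∑ i, (∑ l, x l * v i l) * (∑ l, v i l * x l) := bilin x x
      _ = ∑ i, (∑ l, v i l * x l) ^ 2 := by
          refine Finset.sum_congr rfl fun i _ => ?_
          rw [Finset.sum_congr rfl fun l (_ : l ∈ Finset.univ) => mul_comm (x l) (v i l)]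
          ring
  -- γ-quadratic form
  have hGx : ∀ (x : Fin 3 → ℝ) (i : Fin 3),
      ∑ l, ((Mᵀ * M) *ᵥ x) l * v i l = γ i * (∑ l, v i l * x l) := by
    intro x i
    have e1 : ∑ l, ((Mᵀ * M) *ᵥ x) l * v i l = ((Mᵀ * M) *ᵥ x) ⬝ᵥ v i := rfl
    have e2 : ((Mᵀ * M) *ᵥ x) ⬝ᵥ v i = v i ⬝ᵥ ((Mᵀ * M) *ᵥ x) := dotProduct_comm _ _
    have e3 : v i ⬝ᵥ ((Mᵀ * M) *ᵥ x) = (v i ᵥ* (Mᵀ * M)) ⬝ᵥ x := Matrix.dotProduct_mulVec _ _ _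
    have e4 : v i ᵥ* (Mᵀ * M) = (Mᵀ * M) *ᵥ v i := by
      conv_lhs => rw [← hGT]
      exact Matrix.vecMul_transpose _ _
    have e5 : ((Mᵀ * M) *ᵥ v i) ⬝ᵥ x = (γ i • v i) ⬝ᵥ x := by rw [heig i]
    have e6 : (γ i • v i) ⬝ᵥ x = γ i * (v i ⬝ᵥ x) := smul_dotProduct _ _ _
    rw [e1, e2, e3, e4, e5, e6]
    rfl
  have quadG : ∀ x : Fin 3 → ℝ,
      ∑ j, (M.mulVec x j) ^ 2 = ∑ i, γ i * (∑ l, v i l * x l) ^ 2 := by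
    intro x
    have s1 : ∑ j, (M.mulVec x j) ^ 2 = (M *ᵥ x) ⬝ᵥ (M *ᵥ x) := by
      simp [dotProduct, pow_two]
    have s2 : (M *ᵥ x) ⬝ᵥ (M *ᵥ x) = ∑ l, ((Mᵀ * M) *ᵥ x) l * x l := by
      rw [Matrix.dotProduct_mulVec]
      have : (M *ᵥ x) ᵥ* M = (Mᵀ * M) *ᵥ x := by
        rw [← Matrix.mulVec_transpose M (M *ᵥ x), Matrix.mulVec_mulVec]
      rw [this]
      rfl
    rw [s1, s2, bilin ((Mᵀ * M) *ᵥ x) x]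
    refine Finset.sum_congr rfl fun i _ => ?_
    rw [hGx x i]
    ring
  have hγnn : ∀ i, 0 ≤ γ i := by
    intro i
    have h1 : ∑ j, (M.mulVec (v i) j) ^ 2 = ∑ k, γ k * (∑ l, v k l * v i l) ^ 2 := quadG (v i)
    have h2 : ∀ k, γ k * (∑ l, v k l * v i l) ^ 2 = if k = i then γ i else 0 := by
      intro k
      rw [hortho k i]
      split
      · rename_i hk
        subst hk
        simp
      · simp
    rw [Finset.sum_congr rfl fun k _ => h2 k, Finset.sum_ite_eq' Finset.univ i fun _ => γ i] at h1
    simp only [Finset.mem_univ, if_true] at h1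
    rw [← h1]
    exact Finset.sum_nonneg fun j _ => sq_nonneg _
  -- scalar data
  set t2 := ∑ i, c i ^ 2 with ht2
  set hvec : Fin 3 → ℝ := c ᵥ* M with hhvec
  set h' : Fin 3 → ℝ := fun i => ∑ l, hvec l * v i l with hh'
  set α : Fin 3 → ℝ := fun i => 1 - t2 - γ i with hα
  -- coordinates of a synthesized vector
  have hcoord : ∀ (θ' : Fin 3 → ℝ) (i : Fin 3),
      ∑ l, v i l * (∑ k, θ' k * v k l) = θ' i := by
    intro θ' i
    calc ∑ l, v i l * (∑ k, θ' k * v k l)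
        = ∑ l, ∑ k, θ' k * (v i l * v k l) := by
          refine Finset.sum_congr rfl fun l _ => ?_
          rw [Finset.mul_sum]
          exact Finset.sum_congr rfl fun k _ => by ring
      _ = ∑ k, θ' k * (∑ l, v i l * v k l) := by
          rw [Finset.sum_comm]
          exact Finset.sum_congr rfl fun k _ => by rw [Finset.mul_sum]
      _ = ∑ k, if i = k then θ' k else 0 := by
          refine Finset.sum_congr rfl fun k _ => ?_
          rw [hortho i k]
          split <;> simp
      _ = ∑ k, if k = i then θ' k else 0 := by
          refine Finset.sum_congr rfl fun k _ => ?_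
          by_cases hk : k = i
          · subst hk; simp
          · rw [if_neg hk, if_neg (fun hh => hk hh.symm)]
      _ = θ' i := by
          rw [Finset.sum_ite_eq' Finset.univ i θ']
          simp
  -- H in eigencoordinates
  have Hscalar : ∀ θ' : Fin 3 → ℝ,
      2 * |∑ i, h' i * θ' i| * Real.sqrt (∑ i, θ' i ^ 2) ≤ ∑ i, α i * θ' i ^ 2 := by
    intro θ'
    set θ : Fin 3 → ℝ := fun j => ∑ i, θ' i * v i j with hθ
    have hcrd : ∀ i, (∑ l, v i l * θ l) = θ' i := fun i => hcoord θ' i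
    have hP := pointwise M c hpos θ
    have eq1 : ∑ l, θ l ^ 2 = ∑ i, θ' i ^ 2 := by
      rw [parseval θ]
      exact Finset.sum_congr rfl fun i _ => by rw [hcrd i]
    have eq2 : ∑ i, hvec i * θ i = ∑ i, h' i * θ' i := by
      rw [bilin hvec θ]
      refine Finset.sum_congr rfl fun i _ => ?_
      rw [hcrd i, hh']
    have eq3 : ∑ j, (M.mulVec θ j) ^ 2 = ∑ i, γ i * θ' i ^ 2 := by
      rw [quadG θ]
      exact Finset.sum_congr rfl fun i _ => by rw [hcrd i]
    have eq4 : enorm3 θ = Real.sqrt (∑ i, θ' i ^ 2) := by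
      unfold enorm3
      rw [eq1]
    rw [eq2, eq3, eq4, eq1] at hP
    have eq5 : ∑ i, α i * θ' i ^ 2
        = (∑ i, θ' i ^ 2) - t2 * (∑ i, θ' i ^ 2) - ∑ i, γ i * θ' i ^ 2 := by
      rw [hα]
      simp only
      rw [Finset.mul_sum, ← Finset.sum_sub_distrib, ← Finset.sum_sub_distrib]
      exact Finset.sum_congr rfl fun i _ => by ring
    rw [eq5]
    linarith
  have hα0 : ∀ i, 0 ≤ α i := by
    intro i
    have hH := Hscalar (fun k => if k = i then (1:ℝ) else 0)
    have E2 : ∑ k, (if k = i then (1:ℝ) else 0) ^ 2 = 1 := by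
      rw [Finset.sum_congr rfl fun k _ => (by split <;> simp :
        ((if k = i then (1:ℝ) else 0)) ^ 2 = if k = i then 1 else 0)]
      simp
    have E3 : ∑ k, α k * (if k = i then (1:ℝ) else 0) ^ 2 = α i := by
      have hterm : ∀ k, α k * ((if k = i then (1:ℝ) else 0)) ^ 2 = if k = i then α k else 0 := by
        intro k
        by_cases hk : k = i
        · rw [if_pos hk, if_pos hk, one_pow, mul_one]
        · rw [if_neg hk, if_neg hk]
          ring
      rw [Finset.sum_congr rfl fun k _ => hterm k]
      simp
    rw [E2, E3, Real.sqrt_one] at hH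
    have : 0 ≤ 2 * |∑ k, h' k * (if k = i then (1:ℝ) else 0)| * 1 := by positivity
    linarith
  obtain ⟨ν, hν0, hνle, hcert⟩ := exists_nu α h' hα0 Hscalar
  refine ⟨1 - t2 - ν, ν, ?_, hν0, by ring, ?_, ?_⟩
  · have := hνle 0
    have h0 : α 0 = 1 - t2 - γ 0 := by rw [hα]
    have := hγnn 0
    linarith [hνle 0, hγnn 0, (by rw [hα] : α 0 = 1 - t2 - γ 0)]
  · intro x
    rw [quadG x, parseval x, Finset.mul_sum]
    refine Finset.sum_le_sum fun i _ => ?_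
    have h1 : ν ≤ α i := hνle i
    have h2 : α i = 1 - t2 - γ i := by rw [hα]
    have h3 : γ i ≤ 1 - t2 - ν := by linarith
    exact mul_le_mul_of_nonneg_right h3 (sq_nonneg _)
  · intro x
    have hc := hcert (fun i => ∑ l, v i l * x l)
    have e1 : ∑ i, hvec i * x i = ∑ i, h' i * (∑ l, v i l * x l) := by
      rw [bilin hvec x]
    have e2 : ∑ i, (α i - ν) * (∑ l, v i l * x l) ^ 2
        = (1 - t2 - ν) * (∑ i, x i ^ 2) - ∑ j, (M.mulVec x j) ^ 2 := by
      rw [parseval x, quadG x, Finset.mul_sum, ← Finset.sum_sub_distrib]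
      refine Finset.sum_congr rfl fun i _ => ?_
      have : α i = 1 - t2 - γ i := by rw [hα]
      rw [this]
      ring
    rw [e1]
    calc (∑ i, h' i * (∑ l, v i l * x l)) ^ 2
        ≤ ν * ∑ i, (α i - ν) * (∑ l, v i l * x l) ^ 2 := hc
      _ = ν * ((1 - t2 - ν) * (∑ i, x i ^ 2) - ∑ j, (M.mulVec x j) ^ 2) := by rw [e2]

/-- Key claim: `‖u cᵀ + Θ Mᵀ‖_F² ≤ 1`. -/
lemma claim2 (M : Matrix (Fin 3) (Fin 3) ℝ) (c : Fin 3 → ℝ)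
    (hpos : ∀ r : Fin 3 → ℝ, enorm3 r = 1 → enorm3 (M.mulVec r + c) ≤ 1)
    (u : Fin 3 → ℝ) (Θ : Matrix (Fin 3) (Fin 3) ℝ)
    (hu : ∑ i, u i ^ 2 ≤ 1) (hΘ : ∑ i, ∑ j, Θ i j ^ 2 ≤ 1) :
    ∑ i, ∑ j, (u i * c j + M.mulVec (Θ i) j) ^ 2 ≤ 1 := by
  obtain ⟨μ, ν, hμ0, hν0, hμν, hC1, hC2⟩ := exists_cert M c hpos
  have ht2nn : (0:ℝ) ≤ ∑ k, c k ^ 2 := sumsq_nonneg c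
  set D : Fin 3 → ℝ := fun i => ∑ l, (c ᵥ* M) l * Θ i l with hD
  set P : Fin 3 → ℝ := fun i => ∑ j, Θ i j ^ 2 with hP
  set A : Fin 3 → ℝ := fun i => ∑ j, (M.mulVec (Θ i)) j ^ 2 with hA
  set e : Fin 3 → ℝ := fun i => Real.sqrt (μ * P i - A i) with he
  have hEnn : ∀ i, 0 ≤ μ * P i - A i := fun i => sub_nonneg.mpr (hC1 (Θ i))
  have he0 : ∀ i, 0 ≤ e i := fun i => Real.sqrt_nonneg _
  have he2 : ∀ i, e i ^ 2 = μ * P i - A i := fun i => Real.sq_sqrt (hEnn i)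
  have hDb : ∀ i, |D i| ≤ Real.sqrt ν * e i := by
    intro i
    have h1 : D i ^ 2 ≤ ν * (μ * P i - A i) := hC2 (Θ i)
    calc |D i| = Real.sqrt (D i ^ 2) := (Real.sqrt_sq_eq_abs _).symm
      _ ≤ Real.sqrt (ν * (μ * P i - A i)) := Real.sqrt_le_sqrt h1
      _ = Real.sqrt ν * e i := by rw [Real.sqrt_mul hν0, he]
  have hrow : ∀ i, ∑ j, (u i * c j + M.mulVec (Θ i) j) ^ 2
      = u i ^ 2 * (∑ k, c k ^ 2) + 2 * (u i * D i) + A i := by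
    intro i
    have hcM : ∑ j, M.mulVec (Θ i) j * c j = D i := (vecMul_dot M c (Θ i)).symm
    calc ∑ j, (u i * c j + M.mulVec (Θ i) j) ^ 2
        = ∑ j, (u i ^ 2 * c j ^ 2 + 2 * u i * (M.mulVec (Θ i) j * c j)
            + M.mulVec (Θ i) j ^ 2) :=
          Finset.sum_congr rfl fun j _ => by ring
      _ = u i ^ 2 * (∑ k, c k ^ 2) + 2 * u i * (∑ j, M.mulVec (Θ i) j * c j) + A i := by
          rw [Finset.sum_add_distrib, Finset.sum_add_distrib, ← Finset.mul_sum,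
            ← Finset.mul_sum]
      _ = u i ^ 2 * (∑ k, c k ^ 2) + 2 * (u i * D i) + A i := by rw [hcM]; ring
  set E := Real.sqrt (∑ i, e i ^ 2) with hE
  have hE0 : 0 ≤ E := Real.sqrt_nonneg _
  have hE2 : E ^ 2 = ∑ i, e i ^ 2 := Real.sq_sqrt (Finset.sum_nonneg fun i _ => sq_nonneg _)
  have hcs : ∑ i, |u i| * e i ≤ E := by
    have h1 : (∑ i, |u i| * e i) ^ 2 ≤ (∑ i, |u i| ^ 2) * (∑ i, e i ^ 2) := cs3 _ _
    have h2 : ∑ i, |u i| ^ 2 = ∑ i, u i ^ 2 := Finset.sum_congr rfl fun i _ => sq_abs _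
    have h3 : (∑ i, |u i| * e i) ^ 2 ≤ ∑ i, e i ^ 2 := by
      rw [h2] at h1
      have h4 : (∑ i, u i ^ 2) * (∑ i, e i ^ 2) ≤ 1 * (∑ i, e i ^ 2) :=
        mul_le_mul_of_nonneg_right hu (Finset.sum_nonneg fun i _ => sq_nonneg _)
      rw [one_mul] at h4
      exact le_trans h1 h4
    have h5 : 0 ≤ ∑ i, |u i| * e i :=
      Finset.sum_nonneg fun i _ => mul_nonneg (abs_nonneg _) (he0 i)
    calc ∑ i, |u i| * e i = Real.sqrt ((∑ i, |u i| * e i) ^ 2) := (Real.sqrt_sq h5).symm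
      _ ≤ E := Real.sqrt_le_sqrt h3
  have hmid : ∑ i, u i * D i ≤ Real.sqrt ν * E := by
    calc ∑ i, u i * D i
        ≤ ∑ i, Real.sqrt ν * (|u i| * e i) := by
          refine Finset.sum_le_sum fun i _ => ?_
          calc u i * D i ≤ |u i * D i| := le_abs_self _
            _ = |u i| * |D i| := abs_mul _ _
            _ ≤ |u i| * (Real.sqrt ν * e i) :=
                mul_le_mul_of_nonneg_left (hDb i) (abs_nonneg _)
            _ = Real.sqrt ν * (|u i| * e i) := by ring
      _ = Real.sqrt ν * ∑ i, |u i| * e i := by rw [Finset.mul_sum]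
      _ ≤ Real.sqrt ν * E := mul_le_mul_of_nonneg_left hcs (Real.sqrt_nonneg ν)
  have hAsum : ∑ i, A i = μ * (∑ i, P i) - ∑ i, e i ^ 2 := by
    rw [Finset.sum_congr rfl fun i (_ : i ∈ Finset.univ) =>
      (by rw [he2 i]; ring : A i = μ * P i - e i ^ 2),
      Finset.sum_sub_distrib, ← Finset.mul_sum]
  have hPsum : ∑ i, P i ≤ 1 := hΘ
  have hPnn : 0 ≤ ∑ i, P i := Finset.sum_nonneg fun i _ => sumsq_nonneg _
  have husq : 0 ≤ ∑ i, u i ^ 2 := sumsq_nonneg u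
  have htot : ∑ i, ∑ j, (u i * c j + M.mulVec (Θ i) j) ^ 2
      = (∑ k, c k ^ 2) * (∑ i, u i ^ 2) + 2 * (∑ i, u i * D i) + ∑ i, A i := by
    rw [Finset.sum_congr rfl fun i (_ : i ∈ Finset.univ) => hrow i,
      Finset.sum_add_distrib, Finset.sum_add_distrib, ← Finset.mul_sum, ← Finset.sum_mul]
    ring
  rw [htot, hAsum]
  have hsν : Real.sqrt ν ^ 2 = ν := Real.sq_sqrt hν0
  have hb1 : (∑ k, c k ^ 2) * (∑ i, u i ^ 2) ≤ (∑ k, c k ^ 2) :=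
    mul_le_of_le_one_right ht2nn hu
  have hb2 : μ * (∑ i, P i) ≤ μ := mul_le_of_le_one_right hμ0 hPsum
  nlinarith [sq_nonneg (Real.sqrt ν - E), hmid, hb1, hb2, hE2]

end BlochAux

/-- If `|M r + c| ≤ 1` for all unit vectors `r` (positivity of the associated qubit
map), then for every `3 × 3` real matrix `K`, `|Kc| + ‖KM‖₂ ≤ ‖K‖₂`. -/
theorem bloch_positive_frobenius_bound (M : Matrix (Fin 3) (Fin 3) ℝ) (c : Fin 3 → ℝ)
    (hpos : ∀ r : Fin 3 → ℝ, enorm3 r = 1 → enorm3 (M.mulVec r + c) ≤ 1) :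
    ∀ K : Matrix (Fin 3) (Fin 3) ℝ, enorm3 (K.mulVec c) + frob (K * M) ≤ frob K := by
  intro K
  classical
  have hinv_sq : ∀ a : ℝ, a⁻¹ ^ 2 * a ^ 2 ≤ 1 := by
    intro a
    by_cases ha : a = 0
    · simp [ha]
    · rw [← mul_pow, inv_mul_cancel₀ ha, one_pow]
  have hinv_mul : ∀ a : ℝ, 0 ≤ a → a⁻¹ * a ^ 2 = a := by
    intro a _
    by_cases ha : a = 0
    · simp [ha]
    · field_simp
  set A := enorm3 (K.mulVec c) with hA
  set B := frob (K * M) with hB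
  have hA0 : 0 ≤ A := BlochAux.enorm3_nonneg _
  have hB0 : 0 ≤ B := BlochAux.frob_nonneg _
  have hA2 : A ^ 2 = ∑ i, (K.mulVec c) i ^ 2 := BlochAux.enorm3_sq _
  have hB2 : B ^ 2 = ∑ i, ∑ j, (K * M) i j ^ 2 := BlochAux.frob_sq _
  set u : Fin 3 → ℝ := fun i => A⁻¹ * (K.mulVec c) i with hu'
  set Θ : Matrix (Fin 3) (Fin 3) ℝ := fun i j => B⁻¹ * (K * M) i j with hΘ'
  have hu : ∑ i, u i ^ 2 ≤ 1 := by
    have e1 : ∑ i, u i ^ 2 = A⁻¹ ^ 2 * ∑ i, (K.mulVec c) i ^ 2 := by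
      rw [Finset.mul_sum]
      exact Finset.sum_congr rfl fun i _ => by rw [hu']; ring
    rw [e1, ← hA2]
    exact hinv_sq A
  have hΘsum : ∑ i, ∑ j, Θ i j ^ 2 ≤ 1 := by
    have e1 : ∑ i, ∑ j, Θ i j ^ 2 = B⁻¹ ^ 2 * ∑ i, ∑ j, (K * M) i j ^ 2 := by
      rw [Finset.mul_sum]
      refine Finset.sum_congr rfl fun i _ => ?_
      rw [Finset.mul_sum]
      exact Finset.sum_congr rfl fun j _ => by rw [hΘ']; ring
    rw [e1, ← hB2]
    exact hinv_sq B
  have hS := BlochAux.claim2 M c hpos u Θ hu hΘsum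
  have hMθ : ∀ i j, M.mulVec (Θ i) j = ∑ l, M j l * Θ i l := fun i j => rfl
  have hKX : ∑ i, ∑ j, K i j * (u i * c j + M.mulVec (Θ i) j) = A + B := by
    have split : ∑ i, ∑ j, K i j * (u i * c j + M.mulVec (Θ i) j)
        = (∑ i, ∑ j, K i j * (u i * c j)) + ∑ i, ∑ j, K i j * M.mulVec (Θ i) j := by
      rw [← Finset.sum_add_distrib]
      refine Finset.sum_congr rfl fun i _ => ?_
      rw [← Finset.sum_add_distrib]
      exact Finset.sum_congr rfl fun j _ => by ring
    have part1 : ∑ i, ∑ j, K i j * (u i * c j) = A := by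
      have e1 : ∀ i, ∑ j, K i j * (u i * c j) = u i * (K.mulVec c) i := by
        intro i
        have : (K.mulVec c) i = ∑ j, K i j * c j := rfl
        rw [this, Finset.mul_sum]
        exact Finset.sum_congr rfl fun j _ => by ring
      rw [Finset.sum_congr rfl fun i (_ : i ∈ Finset.univ) => e1 i]
      have e2 : ∑ i, u i * (K.mulVec c) i = A⁻¹ * ∑ i, (K.mulVec c) i ^ 2 := by
        rw [Finset.mul_sum]
        exact Finset.sum_congr rfl fun i _ => by rw [hu']; ring
      rw [e2, ← hA2]
      exact hinv_mul A hA0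
    have part2 : ∑ i, ∑ j, K i j * M.mulVec (Θ i) j = B := by
      have e1 : ∀ i, ∑ j, K i j * M.mulVec (Θ i) j = ∑ l, Θ i l * (K * M) i l := by
        intro i
        calc ∑ j, K i j * M.mulVec (Θ i) j
            = ∑ j, ∑ l, K i j * (M j l * Θ i l) := by
              refine Finset.sum_congr rfl fun j _ => ?_
              rw [hMθ i j, Finset.mul_sum]
          _ = ∑ l, ∑ j, K i j * (M j l * Θ i l) := Finset.sum_comm
          _ = ∑ l, Θ i l * ∑ j, K i j * M j l := by
              refine Finset.sum_congr rfl fun l _ => ?_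
              rw [Finset.mul_sum]
              exact Finset.sum_congr rfl fun j _ => by ring
          _ = ∑ l, Θ i l * (K * M) i l := by
              refine Finset.sum_congr rfl fun l _ => ?_
              rw [Matrix.mul_apply]
      rw [Finset.sum_congr rfl fun i (_ : i ∈ Finset.univ) => e1 i]
      have e2 : ∑ i, ∑ l, Θ i l * (K * M) i l = B⁻¹ * ∑ i, ∑ l, (K * M) i l ^ 2 := by
        rw [Finset.mul_sum]
        refine Finset.sum_congr rfl fun i _ => ?_
        rw [Finset.mul_sum]
        exact Finset.sum_congr rfl fun l _ => by rw [hΘ']; ring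
      rw [e2, ← hB2]
      exact hinv_mul B hB0
    rw [split, part1, part2]
  have hcs := BlochAux.cs9 K (fun i j => u i * c j + M.mulVec (Θ i) j)
  rw [hKX] at hcs
  have hKnn : 0 ≤ ∑ i, ∑ j, K i j ^ 2 :=
    Finset.sum_nonneg fun i _ => Finset.sum_nonneg fun j _ => sq_nonneg _
  have h1 : (A + B) ^ 2 ≤ frob K ^ 2 := by
    calc (A + B) ^ 2
        ≤ (∑ i, ∑ j, K i j ^ 2) * ∑ i, ∑ j, (u i * c j + M.mulVec (Θ i) j) ^ 2 := hcs
      _ ≤ (∑ i, ∑ j, K i j ^ 2) * 1 := mul_le_mul_of_nonneg_left hS hKnn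
      _ = frob K ^ 2 := by rw [mul_one, BlochAux.frob_sq]
  nlinarith [BlochAux.frob_nonneg K, hA0, hB0]
end

section
/- For any linear maps ψ₁,…,ψ_{n−1} on d×d matrices and 0 < λ ≤ 1, the composition Δ_λ ψ₁ Δ_λ ⋯ Δ_λ ψ_{n−1} Δ_λ equals the convex combination Σ_{i=0}^{n−1} [λⁱ(1−λ)/(1−λⁿ)] · ψ₁⋯ψ_i Δ_{λⁿ} ψ_{i+1}⋯ψ_{n−1}, where Δ_λ(X) = λX + (1−λ)(Tr X)𝟙/d and each ψ_j is trace-preserving and sends 𝟙 to a matrix (maps are linear). -/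
open Matrix

/-- The depolarizing map `Δ_λ(X) = λ X + (1-λ)(Tr X) 𝟙 / d`. -/
noncomputable def depol (d : ℕ) (lam : ℝ) (X : Matrix (Fin d) (Fin d) ℂ) :
    Matrix (Fin d) (Fin d) ℂ :=
  (lam : ℂ) • X + (((1 - lam : ℝ) : ℂ) / d) • X.trace • (1 : Matrix (Fin d) (Fin d) ℂ)

/-- `interleave D [ψ₁, …, ψ_k] = D ∘ ψ₁ ∘ D ∘ ψ₂ ∘ ⋯ ∘ ψ_k ∘ D`. -/
def interleave {α : Type*} (D : α → α) : List (α → α) → (α → α)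
  | [] => D
  | f :: fs => D ∘ f ∘ interleave D fs

/-- Composition of a list of maps: `compList [ψ₁, …, ψ_k] = ψ₁ ∘ ⋯ ∘ ψ_k`. -/
def compList {α : Type*} (l : List (α → α)) : α → α := l.foldr (· ∘ ·) id

section Aux

variable {d : ℕ}

local notation "M" => Matrix (Fin d) (Fin d) ℂ

/-- The linearity predicate used in the hypotheses. -/
def IsLin (f : M → M) : Prop := ∀ (a : ℂ) (X Y : M), f (a • X + Y) = a • f X + f Y

lemma IsLin.map_zero {f : M → M} (h : IsLin f) : f 0 = 0 := by
  have h2 : f 0 + 0 = f 0 + f 0 := by simpa using (h 1 0 0)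
  exact (add_left_cancel h2).symm

lemma IsLin.map_smul {f : M → M} (h : IsLin f) (a : ℂ) (X : M) : f (a • X) = a • f X := by
  have := h a X 0
  simpa [h.map_zero] using this

lemma IsLin.map_add {f : M → M} (h : IsLin f) (X Y : M) : f (X + Y) = f X + f Y := by
  simpa using h 1 X Y

lemma IsLin.map_sum {f : M → M} (h : IsLin f) {ι : Type*} (s : Finset ι) (g : ι → M) :
    f (∑ i ∈ s, g i) = ∑ i ∈ s, f (g i) := by
  classical
  induction s using Finset.induction_on with
  | empty => simpa using h.map_zero
  | insert _ _ hx ih => simp [Finset.sum_insert hx, h.map_add, ih]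

lemma compList_nil (X : M) : compList ([] : List (M → M)) X = X := rfl

lemma compList_cons (f : M → M) (l : List (M → M)) (X : M) :
    compList (f :: l) X = f (compList l X) := rfl

lemma compList_append (l₁ l₂ : List (M → M)) (X : M) :
    compList (l₁ ++ l₂) X = compList l₁ (compList l₂ X) := by
  induction l₁ with
  | nil => rfl
  | cons f fs ih => simp [compList_cons, ih]

lemma compList_lin {l : List (M → M)} (hlin : ∀ f ∈ l, IsLin f) : IsLin (compList l) := by
  induction l with
  | nil => intro a X Y; rfl
  | cons f fs ih =>
      intro a X Y
      have hf : IsLin f := hlin f (List.mem_cons_self)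
      have hfs : IsLin (compList fs) := ih (fun g hg => hlin g (List.mem_cons_of_mem _ hg))
      simp [compList_cons, hfs a X Y, hf a (compList fs X) (compList fs Y)]

lemma compList_trace {l : List (M → M)}
    (htr : ∀ f ∈ l, ∀ X : M, (f X).trace = X.trace) (X : M) :
    (compList l X).trace = X.trace := by
  induction l with
  | nil => rfl
  | cons f fs ih =>
      rw [compList_cons, htr f (List.mem_cons_self),
        ih (fun g hg => htr g (List.mem_cons_of_mem _ hg))]

lemma trace_depol (hd : 0 < d) (lam : ℝ) (X : M) :
    (depol d lam X).trace = X.trace := by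
  have hd' : (d : ℂ) ≠ 0 := Nat.cast_ne_zero.mpr hd.ne'
  simp only [depol, Matrix.trace_add, Matrix.trace_smul, Matrix.trace_one, smul_eq_mul,
    Fintype.card_fin]
  field_simp
  push_cast
  ring

lemma trace_interleave (hd : 0 < d) (lam : ℝ) {l : List (M → M)}
    (htr : ∀ f ∈ l, ∀ X : M, (f X).trace = X.trace) (X : M) :
    (interleave (depol d lam) l X).trace = X.trace := by
  induction l with
  | nil => exact trace_depol hd lam X
  | cons f fs ih =>
      show (depol d lam (f (interleave (depol d lam) fs X))).trace = X.trace
      rw [trace_depol hd lam, htr f (List.mem_cons_self),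
        ih (fun g hg => htr g (List.mem_cons_of_mem _ hg))]

/-- Canonical form of the interleaved composition. -/
lemma interleave_canon (hd : 0 < d) (lam : ℝ) (l : List (M → M))
    (hlin : ∀ f ∈ l, IsLin f)
    (htr : ∀ f ∈ l, ∀ X : M, (f X).trace = X.trace) (X : M) :
    interleave (depol d lam) l X =
      ((lam : ℂ) ^ (l.length + 1)) • compList l X +
      ((((1 - lam : ℝ)) : ℂ) / d) • X.trace •
        ∑ i ∈ Finset.range (l.length + 1),
          (lam : ℂ) ^ i • compList (l.take i) (1 : M) := by
  induction l with
  | nil =>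
      simp [interleave, depol, compList_nil]
  | cons f fs ih =>
      have hf : IsLin f := hlin f (List.mem_cons_self)
      have hlin' : ∀ g ∈ fs, IsLin g := fun g hg => hlin g (List.mem_cons_of_mem _ hg)
      have htr' : ∀ g ∈ fs, ∀ X : M, (g X).trace = X.trace :=
        fun g hg => htr g (List.mem_cons_of_mem _ hg)
      have hY : (f (interleave (depol d lam) fs X)).trace = X.trace := by
        rw [htr f (List.mem_cons_self), trace_interleave hd lam htr' X]
      show depol d lam (f (interleave (depol d lam) fs X)) = _
      rw [depol, hY]
      rw [ih hlin' htr']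
      set c : ℂ := (((1 - lam : ℝ)) : ℂ) / d with hc
      -- push f through
      rw [hf ((lam : ℂ) ^ (fs.length + 1)) _ _, hf.map_smul, hf.map_smul, hf.map_sum]
      have hterm : ∀ i, f ((lam : ℂ) ^ i • compList (fs.take i) (1 : M))
          = (lam : ℂ) ^ i • f (compList (fs.take i) (1 : M)) :=
        fun i => hf.map_smul _ _
      simp only [hterm]
      -- now pure module algebra
      have hlen : (f :: fs).length = fs.length + 1 := rfl
      rw [hlen]
      rw [Finset.sum_range_succ' (fun i =>
        (lam : ℂ) ^ i • compList ((f :: fs).take i) (1 : M)) (fs.length + 1)]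
      have htake : ∀ i, compList ((f :: fs).take (i + 1)) (1 : M)
          = f (compList (fs.take i) (1 : M)) := fun i => rfl
      simp only [htake, pow_zero, one_smul, List.take_zero, compList_nil]
      rw [smul_add, smul_smul, ← pow_succ', smul_add, smul_comm (lam : ℂ) c,
        smul_comm (lam : ℂ) X.trace, Finset.smul_sum]
      have hsum : ∀ i ∈ Finset.range (fs.length + 1),
          (lam : ℂ) • (lam : ℂ) ^ i • f (compList (fs.take i) (1 : M))
          = (lam : ℂ) ^ (i + 1) • f (compList (fs.take i) (1 : M)) := by
        intro i _
        rw [smul_smul, ← pow_succ']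
      rw [Finset.sum_congr rfl hsum]
      rw [compList_cons, smul_add, ← add_assoc]

end Aux

/-- `Δ_λ ψ₁ Δ_λ ⋯ Δ_λ ψ_{n-1} Δ_λ` is the convex combination
`Σ_{i=0}^{n-1} [λⁱ(1-λ)/(1-λⁿ)] ψ₁⋯ψ_i Δ_{λⁿ} ψ_{i+1}⋯ψ_{n-1}`, where `n - 1` is the
number of filters and each filter is linear and trace-preserving. -/
theorem depol_interleaved_convex_decomp (d : ℕ) (hd : 0 < d) (lam : ℝ)
    (h0 : 0 < lam) (h1 : lam < 1)
    (l : List (Matrix (Fin d) (Fin d) ℂ → Matrix (Fin d) (Fin d) ℂ))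
    (hlin : ∀ f ∈ l, ∀ (a : ℂ) (X Y : Matrix (Fin d) (Fin d) ℂ),
      f (a • X + Y) = a • f X + f Y)
    (htr : ∀ f ∈ l, ∀ X : Matrix (Fin d) (Fin d) ℂ, (f X).trace = X.trace)
    (X : Matrix (Fin d) (Fin d) ℂ) :
    interleave (depol d lam) l X =
      ∑ i ∈ Finset.range (l.length + 1),
        (((lam ^ i * (1 - lam) / (1 - lam ^ (l.length + 1)) : ℝ)) : ℂ) •
          compList (l.take i) (depol d (lam ^ (l.length + 1)) (compList (l.drop i) X)) := by
  set n := l.length with hn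
  have hμlt : lam ^ (n + 1) < 1 := pow_lt_one₀ h0.le h1 (Nat.succ_ne_zero n)
  have hμne : (1 : ℝ) - lam ^ (n + 1) ≠ 0 := by linarith
  have hlam1 : lam ≠ 1 := h1.ne
  -- rewrite each summand
  have hterm : ∀ i ∈ Finset.range (n + 1),
      (((lam ^ i * (1 - lam) / (1 - lam ^ (n + 1)) : ℝ)) : ℂ) •
        compList (l.take i) (depol d (lam ^ (n + 1)) (compList (l.drop i) X))
      = ((lam : ℂ) ^ (n + 1) * ((lam ^ i * (1 - lam) / (1 - lam ^ (n + 1)) : ℝ) : ℂ)) •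
          compList l X
        + (((1 - lam : ℝ) : ℂ) / d * ((lam : ℂ) ^ i)) • X.trace •
            compList (l.take i) (1 : Matrix (Fin d) (Fin d) ℂ) := by
    intro i _
    have hlin' : ∀ f ∈ l.take i, IsLin f := fun f hf => hlin f (List.mem_of_mem_take hf)
    have htr' : ∀ f ∈ l.drop i, ∀ Y : Matrix (Fin d) (Fin d) ℂ, (f Y).trace = Y.trace :=
      fun f hf => htr f (List.mem_of_mem_drop hf)
    have hL : IsLin (compList (l.take i)) := compList_lin hlin'
    have hTr : (compList (l.drop i) X).trace = X.trace := compList_trace htr' X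
    rw [depol, hTr]
    have hrw : ((((1 - lam ^ (n + 1) : ℝ)) : ℂ) / d) • (X.trace •
        (1 : Matrix (Fin d) (Fin d) ℂ))
        = ((((1 - lam ^ (n + 1) : ℝ)) : ℂ) / d * X.trace) •
          (1 : Matrix (Fin d) (Fin d) ℂ) := by rw [smul_smul]
    rw [hrw, hL _ _ _, hL.map_smul]
    have hcomp : compList (l.take i) (compList (l.drop i) X) = compList l X := by
      rw [← compList_append, List.take_append_drop]
    rw [hcomp, smul_add, smul_smul, smul_smul]
    congr 1
    · congr 1
      push_cast
      ring
    · have hreal : (lam ^ i * (1 - lam) / (1 - lam ^ (n + 1))) * (1 - lam ^ (n + 1))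
          = (1 - lam) * lam ^ i := by
        field_simp
      have hC : ((lam ^ i * (1 - lam) / (1 - lam ^ (n + 1)) : ℝ) : ℂ) *
            (((1 - lam ^ (n + 1) : ℝ)) : ℂ)
          = (((1 - lam : ℝ)) : ℂ) * (lam : ℂ) ^ i := by
        rw [← Complex.ofReal_mul, hreal]
        push_cast
        ring
      rw [smul_smul]
      congr 1
      linear_combination (X.trace / (d : ℂ)) * hC
  rw [Finset.sum_congr rfl hterm, Finset.sum_add_distrib]
  rw [interleave_canon hd lam l hlin htr X]
  congr 1
  · rw [← Finset.sum_smul]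
    congr 1
    have : ∑ i ∈ Finset.range (n + 1),
        (lam : ℂ) ^ (n + 1) * ((lam ^ i * (1 - lam) / (1 - lam ^ (n + 1)) : ℝ) : ℂ)
        = (lam : ℂ) ^ (n + 1) * ((∑ i ∈ Finset.range (n + 1),
            (lam ^ i * (1 - lam) / (1 - lam ^ (n + 1)) : ℝ) : ℝ) : ℂ) := by
      rw [← Finset.mul_sum]
      push_cast
      ring
    rw [this]
    have hsum1 : ∑ i ∈ Finset.range (n + 1),
        (lam ^ i * (1 - lam) / (1 - lam ^ (n + 1)) : ℝ) = 1 := by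
      rw [← Finset.sum_div]
      have : ∑ i ∈ Finset.range (n + 1), lam ^ i * (1 - lam)
          = (∑ i ∈ Finset.range (n + 1), lam ^ i) * (1 - lam) := by
        rw [Finset.sum_mul]
      rw [this, geom_sum_eq hlam1]
      have h2 : (lam - 1) * (1 - lam ^ (n + 1)) ≠ 0 :=
        mul_ne_zero (sub_ne_zero.mpr hlam1) hμne
      rw [div_mul_eq_mul_div, div_div, div_eq_one_iff_eq h2]
      ring
    rw [hsum1]
    simp
    rfl
  · rw [Finset.smul_sum, Finset.smul_sum]
    refine Finset.sum_congr rfl fun i _ => ?_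
    simp only [smul_smul]
    congr 1
    ring
end

section
/- For a unital qubit channel in diagonal Bloch form (L,0) with L = diag(l₁,l₂,l₃), the channel is entanglement-breaking if and only if |l₁|+|l₂|+|l₃| ≤ 1; equivalently, (M,0) is entanglement-breaking iff the trace norm ‖M‖₁ ≤ 1. -/
set_option maxHeartbeats 1000000
open Matrix Kronecker ComplexOrder

/-- A two-qubit (4 × 4) matrix is separable if it is a finite sum of Kronecker
products of positive semidefinite matrices. -/
def IsSepState (R : Matrix (Fin 2 × Fin 2) (Fin 2 × Fin 2) ℂ) : Prop :=
  ∃ (n : ℕ) (A B : Fin n → Matrix (Fin 2) (Fin 2) ℂ),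
    (∀ i, (A i).PosSemidef ∧ (B i).PosSemidef) ∧ R = ∑ i, A i ⊗ₖ B i

/-- The Pauli matrices `X`, `Y`, `Z`. -/
noncomputable def pauli : Fin 3 → Matrix (Fin 2) (Fin 2) ℂ :=
  ![!![0, 1; 1, 0], !![0, -Complex.I; Complex.I, 0], !![1, 0; 0, -1]]

lemma pauli_herm (i : Fin 3) : (pauli i)ᴴ = pauli i := by
  fin_cases i <;> ext a b <;> fin_cases a <;> fin_cases b <;>
    simp [pauli, conjTranspose_apply]

lemma pauli_sq (i : Fin 3) : pauli i * pauli i = 1 := by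
  fin_cases i <;> ext a b <;> fin_cases a <;> fin_cases b <;>
    simp [pauli, Matrix.mul_apply, Fin.sum_univ_two, Matrix.one_apply, Complex.I_mul_I]

lemma kron_conjTranspose (A B : Matrix (Fin 2) (Fin 2) ℂ) : (A ⊗ₖ B)ᴴ = Aᴴ ⊗ₖ Bᴴ := by
  ext ⟨i, j⟩ ⟨k, m⟩
  simp [conjTranspose_apply, kroneckerMap_apply]

lemma neg_kron (A B : Matrix (Fin 2) (Fin 2) ℂ) : (-A) ⊗ₖ B = -(A ⊗ₖ B) := by
  ext ⟨i, j⟩ ⟨k, m⟩; simp [kroneckerMap_apply]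

lemma kron_neg (A B : Matrix (Fin 2) (Fin 2) ℂ) : A ⊗ₖ (-B) = -(A ⊗ₖ B) := by
  ext ⟨i, j⟩ ⟨k, m⟩; simp [kroneckerMap_apply]

lemma psd_kron {A B : Matrix (Fin 2) (Fin 2) ℂ} (hA : A.PosSemidef) (hB : B.PosSemidef) :
    (A ⊗ₖ B).PosSemidef := by
  exact hA.kronecker hB

lemma psd_smul {M : Matrix (Fin 2) (Fin 2) ℂ} (hM : M.PosSemidef) {r : ℝ} (hr : 0 ≤ r) :
    ((r : ℂ) • M).PosSemidef := by
  refine Matrix.posSemidef_iff_dotProduct_mulVec.mpr ⟨?_, ?_⟩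
  · unfold Matrix.IsHermitian
    rw [conjTranspose_smul, hM.1.eq, Complex.star_def, Complex.conj_ofReal]
  · intro x
    rw [smul_mulVec, dotProduct_smul, smul_eq_mul]
    exact mul_nonneg (by exact_mod_cast hr) (hM.dotProduct_mulVec_nonneg x)

lemma proj_psd {σ : Matrix (Fin 2) (Fin 2) ℂ} (h1 : σᴴ = σ) (h2 : σ * σ = 1) :
    ((1/2 : ℂ) • (1 + σ)).PosSemidef := by
  have hsq : (1 + σ) * (1 + σ) = (2 : ℂ) • (1 + σ) := by
    rw [mul_add, mul_one, add_mul, one_mul, h2]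
    module
  have hst : star (1/2 : ℂ) = (1/2 : ℂ) := by simp [Complex.star_def]
  have key : (1/2 : ℂ) • (1 + σ) = ((1/2 : ℂ) • (1 + σ))ᴴ * ((1/2 : ℂ) • (1 + σ)) := by
    rw [conjTranspose_smul, conjTranspose_add, conjTranspose_one, h1, hst,
      Matrix.smul_mul, Matrix.mul_smul, hsq]
    module
  rw [key]
  exact Matrix.posSemidef_conjTranspose_mul_self _

lemma projP_psd (i : Fin 3) : ((1/2 : ℂ) • (1 + pauli i)).PosSemidef :=
  proj_psd (pauli_herm i) (pauli_sq i)

lemma projM_psd (i : Fin 3) : ((1/2 : ℂ) • (1 + -pauli i)).PosSemidef :=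
  proj_psd (by rw [conjTranspose_neg, pauli_herm]) (by rw [neg_mul_neg, pauli_sq])

noncomputable def Pp (i : Fin 3) : Matrix (Fin 2) (Fin 2) ℂ := (1/2 : ℂ) • (1 + pauli i)
noncomputable def Pm (i : Fin 3) : Matrix (Fin 2) (Fin 2) ℂ := (1/2 : ℂ) • (1 + -pauli i)

lemma sep_of_bound (l : Fin 3 → ℝ) (h : |l 0| + |l 1| + |l 2| ≤ 1) :
    IsSepState ((1 / 4 : ℂ) •
        ((1 : Matrix (Fin 2 × Fin 2) (Fin 2 × Fin 2) ℂ) +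
          ∑ i : Fin 3, (l i : ℂ) • (pauli i ⊗ₖ (pauli i)ᵀ))) := by
  refine ⟨13,
    ![ (((1 - |l 0| - |l 1| - |l 2|)/4 : ℝ) : ℂ) • 1,
       (((|l 0| + l 0)/4 : ℝ) : ℂ) • Pp 0, (((|l 0| + l 0)/4 : ℝ) : ℂ) • Pm 0,
       (((|l 0| - l 0)/4 : ℝ) : ℂ) • Pp 0, (((|l 0| - l 0)/4 : ℝ) : ℂ) • Pm 0,
       (((|l 1| + l 1)/4 : ℝ) : ℂ) • Pp 1, (((|l 1| + l 1)/4 : ℝ) : ℂ) • Pm 1,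
       (((|l 1| - l 1)/4 : ℝ) : ℂ) • Pp 1, (((|l 1| - l 1)/4 : ℝ) : ℂ) • Pm 1,
       (((|l 2| + l 2)/4 : ℝ) : ℂ) • Pp 2, (((|l 2| + l 2)/4 : ℝ) : ℂ) • Pm 2,
       (((|l 2| - l 2)/4 : ℝ) : ℂ) • Pp 2, (((|l 2| - l 2)/4 : ℝ) : ℂ) • Pm 2 ],
    ![ 1,
       (Pp 0)ᵀ, (Pm 0)ᵀ, (Pm 0)ᵀ, (Pp 0)ᵀ,
       (Pp 1)ᵀ, (Pm 1)ᵀ, (Pm 1)ᵀ, (Pp 1)ᵀ,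
       (Pp 2)ᵀ, (Pm 2)ᵀ, (Pm 2)ᵀ, (Pp 2)ᵀ ], ?_, ?_⟩
  · intro i
    have h0 : (0:ℝ) ≤ (1 - |l 0| - |l 1| - |l 2|)/4 := by
      have := abs_nonneg (l 0); linarith
    have hp : ∀ j, (0:ℝ) ≤ (|l j| + l j)/4 := fun j => by
      have := neg_abs_le (l j); linarith
    have hm : ∀ j, (0:ℝ) ≤ (|l j| - l j)/4 := fun j => by
      have := le_abs_self (l j); linarith
    fin_cases i
    · exact ⟨psd_smul Matrix.PosSemidef.one h0, Matrix.PosSemidef.one⟩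
    · exact ⟨psd_smul (projP_psd 0) (hp 0), (projP_psd 0).transpose⟩
    · exact ⟨psd_smul (projM_psd 0) (hp 0), (projM_psd 0).transpose⟩
    · exact ⟨psd_smul (projP_psd 0) (hm 0), (projM_psd 0).transpose⟩
    · exact ⟨psd_smul (projM_psd 0) (hm 0), (projP_psd 0).transpose⟩
    · exact ⟨psd_smul (projP_psd 1) (hp 1), (projP_psd 1).transpose⟩
    · exact ⟨psd_smul (projM_psd 1) (hp 1), (projM_psd 1).transpose⟩
    · exact ⟨psd_smul (projP_psd 1) (hm 1), (projM_psd 1).transpose⟩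
    · exact ⟨psd_smul (projM_psd 1) (hm 1), (projP_psd 1).transpose⟩
    · exact ⟨psd_smul (projP_psd 2) (hp 2), (projP_psd 2).transpose⟩
    · exact ⟨psd_smul (projM_psd 2) (hp 2), (projM_psd 2).transpose⟩
    · exact ⟨psd_smul (projP_psd 2) (hm 2), (projM_psd 2).transpose⟩
    · exact ⟨psd_smul (projM_psd 2) (hm 2), (projP_psd 2).transpose⟩
  · simp only [Fin.sum_univ_succ, Fin.sum_univ_zero, Matrix.cons_val_zero,
      Matrix.cons_val_succ, add_zero]
    simp only [Pp, Pm, transpose_smul, transpose_add, transpose_one, transpose_neg,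
      Matrix.smul_kronecker, Matrix.kronecker_smul, Matrix.add_kronecker,
      Matrix.kronecker_add, Matrix.one_kronecker_one, neg_kron,
      kron_neg, Fin.sum_univ_three, Fin.succ_zero_eq_one, Fin.succ_one_eq_two]
    push_cast
    module


lemma psd_sum {n : ℕ} (f : Fin n → Matrix (Fin 2 × Fin 2) (Fin 2 × Fin 2) ℂ)
    (hf : ∀ i, (f i).PosSemidef) : (∑ i, f i).PosSemidef := by
  classical
  induction n with
  | zero => simpa using Matrix.PosSemidef.zero
  | succ m ih =>
      rw [Fin.sum_univ_succ]
      exact (hf 0).add (ih _ fun i => hf i.succ)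

/-- partial transpose on the second factor -/
def PT (R : Matrix (Fin 2 × Fin 2) (Fin 2 × Fin 2) ℂ) : Matrix (Fin 2 × Fin 2) (Fin 2 × Fin 2) ℂ :=
  Matrix.of fun a b => R (a.1, b.2) (b.1, a.2)

lemma PT_kron (A B : Matrix (Fin 2) (Fin 2) ℂ) : PT (A ⊗ₖ B) = A ⊗ₖ Bᵀ := by
  ext ⟨i, j⟩ ⟨k, m⟩
  simp [PT, kroneckerMap_apply]

lemma PT_sum {n : ℕ} (f : Fin n → Matrix (Fin 2 × Fin 2) (Fin 2 × Fin 2) ℂ) :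
    PT (∑ i, f i) = ∑ i, PT (f i) := by
  ext ⟨i, j⟩ ⟨k, m⟩
  simp [PT, Matrix.sum_apply]

lemma PT_smul (c : ℂ) (R : Matrix (Fin 2 × Fin 2) (Fin 2 × Fin 2) ℂ) :
    PT (c • R) = c • PT R := by
  ext ⟨i, j⟩ ⟨k, m⟩
  simp [PT]

lemma PT_add (R S : Matrix (Fin 2 × Fin 2) (Fin 2 × Fin 2) ℂ) : PT (R + S) = PT R + PT S := by
  ext ⟨i, j⟩ ⟨k, m⟩
  simp [PT]

lemma PT_one : PT (1 : Matrix (Fin 2 × Fin 2) (Fin 2 × Fin 2) ℂ) = 1 := by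
  ext ⟨i, j⟩ ⟨k, m⟩
  simp [PT, Matrix.one_apply, Prod.ext_iff, and_comm, eq_comm]

lemma bound_of_sep (l : Fin 3 → ℝ)
    (hs : IsSepState ((1 / 4 : ℂ) •
        ((1 : Matrix (Fin 2 × Fin 2) (Fin 2 × Fin 2) ℂ) +
          ∑ i : Fin 3, (l i : ℂ) • (pauli i ⊗ₖ (pauli i)ᵀ)))) :
    |l 0| + |l 1| + |l 2| ≤ 1 := by
  obtain ⟨n, A, B, hAB, hR⟩ := hs
  have hPSD : ((1 / 4 : ℂ) • ((1 : Matrix (Fin 2 × Fin 2) (Fin 2 × Fin 2) ℂ) +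
      ∑ i : Fin 3, (l i : ℂ) • (pauli i ⊗ₖ (pauli i)ᵀ))).PosSemidef := by
    rw [hR]; exact psd_sum _ fun i => psd_kron (hAB i).1 (hAB i).2
  have hPT : ((1 / 4 : ℂ) • ((1 : Matrix (Fin 2 × Fin 2) (Fin 2 × Fin 2) ℂ) +
      ∑ i : Fin 3, (l i : ℂ) • (pauli i ⊗ₖ pauli i))).PosSemidef := by
    have h2 : PT ((1 / 4 : ℂ) • ((1 : Matrix (Fin 2 × Fin 2) (Fin 2 × Fin 2) ℂ) +
        ∑ i : Fin 3, (l i : ℂ) • (pauli i ⊗ₖ (pauli i)ᵀ))) =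
        (1 / 4 : ℂ) • ((1 : Matrix (Fin 2 × Fin 2) (Fin 2 × Fin 2) ℂ) +
        ∑ i : Fin 3, (l i : ℂ) • (pauli i ⊗ₖ pauli i)) := by
      rw [PT_smul, PT_add, PT_one, PT_sum]
      simp only [PT_smul, PT_kron, transpose_transpose]
    rw [← h2, hR, PT_sum]
    refine psd_sum _ fun i => ?_
    rw [PT_kron]
    exact psd_kron (hAB i).1 (hAB i).2.transpose
  have conv : ∀ {z : ℂ} (r : ℝ), z = (r:ℂ) → 0 ≤ z → (0:ℝ) ≤ r := by
    intro z r hz hle; rw [hz] at hle; exact_mod_cast hle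
  have e1 := hPSD.dotProduct_mulVec_nonneg (fun p => ![![(1:ℂ),0],![0,1]] p.1 p.2)
  have e2 := hPSD.dotProduct_mulVec_nonneg (fun p => ![![(1:ℂ),0],![0,-1]] p.1 p.2)
  have e3 := hPSD.dotProduct_mulVec_nonneg (fun p => ![![(0:ℂ),1],![1,0]] p.1 p.2)
  have e4 := hPSD.dotProduct_mulVec_nonneg (fun p => ![![(0:ℂ),1],![-1,0]] p.1 p.2)
  have f1 := hPT.dotProduct_mulVec_nonneg (fun p => ![![(1:ℂ),0],![0,1]] p.1 p.2)
  have f2 := hPT.dotProduct_mulVec_nonneg (fun p => ![![(1:ℂ),0],![0,-1]] p.1 p.2)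
  have f3 := hPT.dotProduct_mulVec_nonneg (fun p => ![![(0:ℂ),1],![1,0]] p.1 p.2)
  have f4 := hPT.dotProduct_mulVec_nonneg (fun p => ![![(0:ℂ),1],![-1,0]] p.1 p.2)
  simp only [dotProduct, Matrix.mulVec, Matrix.of_apply, Fintype.sum_prod_type,
    Fin.sum_univ_two, Fin.sum_univ_three, Matrix.smul_apply, Matrix.add_apply,
    Matrix.one_apply, Finset.sum_apply, Matrix.kroneckerMap_apply, Matrix.transpose_apply,
    pauli, Matrix.cons_val_zero, Matrix.cons_val_one, Matrix.head_cons, Matrix.cons_val',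
    Matrix.head_fin_const, Matrix.empty_val', Matrix.cons_val_fin_one, Pi.star_apply,
    smul_eq_mul, star_one, star_zero, mul_one, mul_zero, one_mul, zero_mul, add_zero,
    zero_add, Complex.I_mul_I, if_true, if_false] at e1 e2 e3 e4 f1 f2 f3 f4
  norm_num [Matrix.cons_val_two, Matrix.of_apply] at e1 e2 e3 e4 f1 f2 f3 f4
  have g1 := conv ((1 + l 0 + l 1 + l 2)/2) (by push_cast; ring) e1
  have g2 := conv ((1 - l 0 - l 1 + l 2)/2) (by push_cast; ring) e2
  have g3 := conv ((1 + l 0 - l 1 - l 2)/2) (by push_cast; ring) e3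
  have g4 := conv ((1 - l 0 + l 1 - l 2)/2) (by push_cast; ring) e4
  have g5 := conv ((1 + l 0 - l 1 + l 2)/2) (by push_cast; ring) f1
  have g6 := conv ((1 - l 0 + l 1 + l 2)/2) (by push_cast; ring) f2
  have g7 := conv ((1 + l 0 + l 1 - l 2)/2) (by push_cast; ring) f3
  have g8 := conv ((1 - l 0 - l 1 - l 2)/2) (by push_cast; ring) f4
  rcases abs_cases (l 0) with ⟨h0, _⟩ | ⟨h0, _⟩ <;>
    rcases abs_cases (l 1) with ⟨h1, _⟩ | ⟨h1, _⟩ <;>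
      rcases abs_cases (l 2) with ⟨h2, _⟩ | ⟨h2, _⟩ <;>
        linarith


/-- A unital qubit channel in diagonal Bloch form `(L, 0)`, `L = diag(l₁,l₂,l₃)`, is
entanglement-breaking (its Choi matrix is separable) if and only if
`|l₁| + |l₂| + |l₃| ≤ 1`. -/
theorem unital_qubit_EB_iff (l : Fin 3 → ℝ) :
    IsSepState ((1 / 4 : ℂ) •
        ((1 : Matrix (Fin 2 × Fin 2) (Fin 2 × Fin 2) ℂ) +
          ∑ i : Fin 3, (l i : ℂ) • (pauli i ⊗ₖ (pauli i)ᵀ))) ↔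
      |l 0| + |l 1| + |l 2| ≤ 1 :=
  ⟨bound_of_sep l, sep_of_bound l⟩
end
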